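/- arXiv:2109.11711 — 3 statements merged into one kernel-verified Lean document; each statement's English description precedes it below -/
import Mathlib

section
/- Theorem (stable volumes are the noise-robust part of optimal volumes, graph-theoretic form of the paper's Theorem 3.2). Let r = (r̂, ≼_r) be an order with levels on X, let (τ₀, ω₀) be a persistence pair of r, and let ε > 0. Then SV_ε(r, τ₀, ω₀) = ⋂_{q ∈ R_ε} OV(q, ω₀). -/
open scoped Classical

namespace StableVol

/-- A finite abstract simplicial complex of dimension `n`: a finite family of nonempty
finite subsets of the vertex set, closed under nonempty subsets, in which every element
is contained in an element of cardinality `n+1`. -/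
structure NComplex (V : Type*) [DecidableEq V] (n : ℕ) where
  X : Finset (Finset V)
  nonempty_mem : ∀ σ ∈ X, σ.Nonempty
  down_closed : ∀ σ ∈ X, ∀ σ' : Finset V, σ' ⊆ σ → σ'.Nonempty → σ' ∈ X
  contained_top : ∀ σ ∈ X, ∃ ω ∈ X, σ ⊆ ω ∧ ω.card = n + 1

variable {V : Type*} [DecidableEq V] {n : ℕ}

/-- An `n`-cell is either an `n`-simplex (`some ω`) or the formal cell `ω∞` (`none`). -/
abbrev Cell (V : Type*) := Option (Finset V)

/-- `τ` is a face of the cell `c`.  For `c = some ω` this means that `ω` is an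
`n`-simplex of `X` containing `τ`; the faces of `ω∞ = none` are the `(n-1)`-simplices
having exactly one `n`-simplex coface. -/
def faceCell (C : NComplex V n) (τ : Finset V) : Cell V → Prop
  | some ω => ω ∈ C.X ∧ ω.card = n + 1 ∧ τ ⊆ ω
  | none => {ω | ω ∈ C.X ∧ ω.card = n + 1 ∧ τ ⊆ ω}.ncard = 1

def IsCell (C : NComplex V n) : Cell V → Prop
  | some ω => ω ∈ C.X ∧ ω.card = n + 1
  | none => True

/-- Adjacency in the dual graph, restricted to the edge set `E ⊆ X^(n-1)`. -/
def adj (C : NComplex V n) (E : Set (Finset V)) (c c' : Cell V) : Prop :=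
  ∃ τ ∈ E, faceCell C τ c ∧ faceCell C τ c' ∧ c ≠ c'

/-- `KV C E c₀`: the set of `n`-cells in the connected component of `c₀` in the
subgraph of the dual graph with edge set `E`. -/
def KV (C : NComplex V n) (E : Set (Finset V)) (c₀ : Cell V) : Set (Cell V) :=
  {c | Relation.ReflTransGen (adj C E) c₀ c}

/-- Every `(n-1)`-simplex of `X` is a face of exactly two `n`-cells. -/
def TwoCofaces (C : NComplex V n) : Prop :=
  ∀ τ ∈ C.X, τ.card = n →
    ∃ c₁ c₂ : Cell V, c₁ ≠ c₂ ∧ ∀ c : Cell V, faceCell C τ c ↔ (c = c₁ ∨ c = c₂)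

/-- The dual graph (with full edge set `X^(n-1)`) is connected. -/
def DualConn (C : NComplex V n) : Prop :=
  ∀ c c' : Cell V, IsCell C c → IsCell C c' →
    c' ∈ KV C {τ | τ ∈ C.X ∧ τ.card = n} c

/-- A level function: monotone with respect to strict inclusion of simplices. -/
def IsLevelFun (C : NComplex V n) (lev : Finset V → ℝ) : Prop :=
  ∀ σ ∈ C.X, ∀ σ' ∈ C.X, σ ⊂ σ' → lev σ ≤ lev σ'

/-- `(lev, slt)` is an order with levels on `X`: `lev` is a level function and `slt`
is (the strict form of) a linear order on `X` refining both `lev` and strict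
inclusion. -/
def IsOWL (C : NComplex V n) (lev : Finset V → ℝ)
    (slt : Finset V → Finset V → Prop) : Prop :=
  IsLevelFun C lev ∧
  (∀ σ ∈ C.X, ¬ slt σ σ) ∧
  (∀ σ ∈ C.X, ∀ σ' ∈ C.X, ∀ σ'' ∈ C.X, slt σ σ' → slt σ' σ'' → slt σ σ'') ∧
  (∀ σ ∈ C.X, ∀ σ' ∈ C.X, σ ≠ σ' → slt σ σ' ∨ slt σ' σ) ∧
  (∀ σ ∈ C.X, ∀ σ' ∈ C.X, slt σ σ' → lev σ ≤ lev σ') ∧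
  (∀ σ ∈ C.X, ∀ σ' ∈ C.X, σ ⊂ σ' → slt σ σ')

/-- Extension of a strict order on simplices to `n`-cells, `ω∞ = none` being the
unique maximum. -/
def cslt (slt : Finset V → Finset V → Prop) : Cell V → Cell V → Prop
  | some σ, some σ' => slt σ σ'
  | some _, none => True
  | none, _ => False

/-- `m` is the maximum cell of the set `S` with respect to the order `slt`. -/
def IsMaxCell (slt : Finset V → Finset V → Prop) (S : Set (Cell V)) (m : Cell V) :
    Prop :=
  m ∈ S ∧ ∀ c ∈ S, c ≠ m → cslt slt c m

/-- Edge set of `G(≻ σ₀)`: the `(n-1)`-simplices strictly above `σ₀`. -/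
def Egt (C : NComplex V n) (slt : Finset V → Finset V → Prop) (σ₀ : Finset V) :
    Set (Finset V) :=
  {τ | τ ∈ C.X ∧ τ.card = n ∧ slt σ₀ τ}

/-- Edge set of `G(⪰ σ₀)`. -/
def Ege (C : NComplex V n) (slt : Finset V → Finset V → Prop) (σ₀ : Finset V) :
    Set (Finset V) :=
  {τ | τ ∈ C.X ∧ τ.card = n ∧ (τ = σ₀ ∨ slt σ₀ τ)}

/-- Edge set of `G(lev ≥ s)`. -/
def Elev (C : NComplex V n) (lev : Finset V → ℝ) (s : ℝ) : Set (Finset V) :=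
  {τ | τ ∈ C.X ∧ τ.card = n ∧ s ≤ lev τ}

/-- `(τ₀, ω₀)` is a persistence pair of the order `slt`: the two `n`-cells having
`τ₀` as a face lie in distinct connected components of `G(≻ τ₀)`, and `ω₀` is the
smaller of the two maximum cells of these two components. -/
def IsPersPair (C : NComplex V n) (slt : Finset V → Finset V → Prop)
    (τ₀ ω₀ : Finset V) : Prop :=
  τ₀ ∈ C.X ∧ τ₀.card = n ∧ ω₀ ∈ C.X ∧ ω₀.card = n + 1 ∧
  ∃ c₁ c₂ : Cell V, c₁ ≠ c₂ ∧ faceCell C τ₀ c₁ ∧ faceCell C τ₀ c₂ ∧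
    c₂ ∉ KV C (Egt C slt τ₀) c₁ ∧
    ∃ m₂ : Cell V,
      IsMaxCell slt (KV C (Egt C slt τ₀) c₁) (some ω₀) ∧
      IsMaxCell slt (KV C (Egt C slt τ₀) c₂) m₂ ∧
      cslt slt (some ω₀) m₂

/-- The optimal volume `OV(q, ω₀) = K_V(G(≻_q τ_{q,ω₀}), ω₀)`. -/
def OV (C : NComplex V n) (slt : Finset V → Finset V → Prop) (ω₀ : Finset V) :
    Set (Cell V) :=
  {c | ∃ τ, IsPersPair C slt τ ω₀ ∧ c ∈ KV C (Egt C slt τ) (some ω₀)}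

/-- The stable volume `SV_ε(r, τ₀, ω₀) = K_V(G(r̂ ≥ r̂(τ₀) + ε), ω₀)`. -/
def SV (C : NComplex V n) (lev : Finset V → ℝ) (τ₀ ω₀ : Finset V) (ε : ℝ) :
    Set (Cell V) :=
  KV C (Elev C lev (lev τ₀ + ε)) (some ω₀)

/-- `(qlev, qslt) ∈ R_ε`: an order with levels uniformly `ε/2`-close to `rlev`
satisfying the `(r, ω₀)`-order condition. -/
def InR (C : NComplex V n) (rlev : Finset V → ℝ)
    (rslt : Finset V → Finset V → Prop) (ω₀ : Finset V) (ε : ℝ)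
    (qlev : Finset V → ℝ) (qslt : Finset V → Finset V → Prop) : Prop :=
  IsOWL C qlev qslt ∧ (∀ σ ∈ C.X, |qlev σ - rlev σ| < ε / 2) ∧
  (∀ σ ∈ C.X, rslt σ ω₀ → qslt σ ω₀)

/-- `F_{ε,n}`: the `n`-simplices with level at least `lev τ₀ + ε` that precede `ω₀`. -/
def Fcells (C : NComplex V n) (lev : Finset V → ℝ)
    (slt : Finset V → Finset V → Prop) (τ₀ ω₀ : Finset V) (ε : ℝ) :
    Set (Finset V) :=
  {σ | σ ∈ C.X ∧ σ.card = n + 1 ∧ lev τ₀ + ε ≤ lev σ ∧ slt σ ω₀}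

/-- `F_{ε,n-1}`: the `(n-1)`-simplices with level at least `lev τ₀ + ε` that
precede `ω₀`. -/
def Fedges (C : NComplex V n) (lev : Finset V → ℝ)
    (slt : Finset V → Finset V → Prop) (τ₀ ω₀ : Finset V) (ε : ℝ) :
    Set (Finset V) :=
  {σ | σ ∈ C.X ∧ σ.card = n ∧ lev τ₀ + ε ≤ lev σ ∧ slt σ ω₀}

/-- `τ*(∂z)`: the `ℤ/2ℤ`-sum of the coefficients of `z` over the `n`-simplex
cofaces of `τ`. -/
def bsum (C : NComplex V n) (τ : Finset V) (z : Finset V → ZMod 2) : ZMod 2 :=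
  ∑ ω ∈ C.X.filter (fun ω => ω.card = n + 1 ∧ τ ⊆ ω), z ω

/-- A feasible chain `z = ω₀ + Σ_{ω ∈ F_{ε,n}} α_ω ω` with `τ*(∂z) = 0` for all
`τ ∈ F_{ε,n-1}`. -/
def IsFeasible (C : NComplex V n) (lev : Finset V → ℝ)
    (slt : Finset V → Finset V → Prop) (τ₀ ω₀ : Finset V) (ε : ℝ)
    (z : Finset V → ZMod 2) : Prop :=
  z ω₀ = 1 ∧
  (∀ ω : Finset V, ω ≠ ω₀ → ω ∉ Fcells C lev slt τ₀ ω₀ ε → z ω = 0) ∧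
  (∀ τ ∈ Fedges C lev slt τ₀ ω₀ ε, bsum C τ z = 0)

/-- `‖z‖₀`: the number of simplices of `X` with nonzero coefficient in `z`. -/
def norm0 (C : NComplex V n) (z : Finset V → ZMod 2) : ℕ :=
  (C.X.filter fun ω => z ω ≠ 0).card

/-- The level function of the perturbed order `q(r, η, A)`. -/
noncomputable def pertLev (C : NComplex V n) (rlev : Finset V → ℝ) (η : ℝ)
    (A : Set (Finset V)) : Finset V → ℝ :=
  fun σ => if (σ ∈ C.X ∧ σ.card = n + 1) ∨ σ ∈ A then rlev σ + η else rlev σ - η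

/-- The strict order of the perturbed order `q(r, η, A)`. -/
def pertSlt (C : NComplex V n) (rlev : Finset V → ℝ)
    (rslt : Finset V → Finset V → Prop) (η : ℝ) (A : Set (Finset V)) :
    Finset V → Finset V → Prop :=
  fun σ σ' => pertLev C rlev η A σ < pertLev C rlev η A σ' ∨
    (pertLev C rlev η A σ = pertLev C rlev η A σ' ∧ rslt σ σ')

/-- The `(n-1)`-simplices that are edges of the connected component of `c₀` in the
subgraph with edge set `E`. -/
def compEdges (C : NComplex V n) (E : Set (Finset V)) (c₀ : Cell V) :
    Set (Finset V) :=
  {τ | τ ∈ E ∧ ∃ c, faceCell C τ c ∧ c ∈ KV C E c₀}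

/-- `IsPath C E c c' vs es`: `vs` is the vertex list and `es` the edge list of a walk
from `c` to `c'` in the subgraph of the dual graph with edge set `E`. -/
inductive IsPath (C : NComplex V n) (E : Set (Finset V)) :
    Cell V → Cell V → List (Cell V) → List (Finset V) → Prop
  | nil (c : Cell V) : IsPath C E c c [c] []
  | cons {c c' c'' : Cell V} {vs : List (Cell V)} {es : List (Finset V)}
      {τ : Finset V} : τ ∈ E → faceCell C τ c → faceCell C τ c' → c ≠ c' →
      IsPath C E c' c'' vs es → IsPath C E c c'' (c :: vs) (τ :: es)



/-! ### Auxiliary lemmas -/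

section Aux

variable {C : NComplex V n}

/-- A cell is *good* if, whenever it is a simplex, it is an `n`-simplex of `X`. -/
def Good (C : NComplex V n) (c : Cell V) : Prop :=
  ∀ σ : Finset V, c = some σ → σ ∈ C.X ∧ σ.card = n + 1

lemma good_none : Good C none := by intro σ h; cases h

lemma good_omega {ω : Finset V} (h1 : ω ∈ C.X) (h2 : ω.card = n + 1) :
    Good C (some ω) := by
  rintro σ hσ; cases hσ; exact ⟨h1, h2⟩

lemma good_of_face {τ : Finset V} {c : Cell V} (h : faceCell C τ c) : Good C c := by
  cases c with
  | none => exact good_none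
  | some σ =>
    rintro σ' hσ'; cases hσ'
    exact ⟨h.1, h.2.1⟩

lemma card_le_of_mem {σ : Finset V} (h : σ ∈ C.X) : σ.card ≤ n + 1 := by
  obtain ⟨ω, _, hsub, hcard⟩ := C.contained_top σ h
  calc σ.card ≤ ω.card := Finset.card_le_card hsub
  _ = n + 1 := hcard

/-! #### Basic `KV` lemmas -/

lemma adj_symm {E : Set (Finset V)} {c c' : Cell V} (h : adj C E c c') : adj C E c' c := by
  obtain ⟨τ, h1, h2, h3, h4⟩ := h
  exact ⟨τ, h1, h3, h2, h4.symm⟩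

lemma kv_refl {E : Set (Finset V)} (c : Cell V) : c ∈ KV C E c :=
  Relation.ReflTransGen.refl

lemma kv_trans {E : Set (Finset V)} {a b c : Cell V}
    (h1 : b ∈ KV C E a) (h2 : c ∈ KV C E b) : c ∈ KV C E a :=
  Relation.ReflTransGen.trans h1 h2

lemma kv_symm {E : Set (Finset V)} {a b : Cell V} (h : b ∈ KV C E a) : a ∈ KV C E b :=
  (@Relation.ReflTransGen.symmetric _ _ ⟨fun _ _ h => adj_symm h⟩).symm _ _ h

lemma kv_comp_eq {E : Set (Finset V)} {a b : Cell V} (h : b ∈ KV C E a) :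
    KV C E b = KV C E a := by
  ext c
  exact ⟨fun hc => kv_trans h hc, fun hc => kv_trans (kv_symm h) hc⟩

lemma kv_mono {E E' : Set (Finset V)} (hE : E ⊆ E') {a : Cell V} :
    KV C E a ⊆ KV C E' a := by
  intro c hc
  induction hc with
  | refl => exact kv_refl _
  | tail _ hbc ih =>
    obtain ⟨τ, h1, h2, h3, h4⟩ := hbc
    exact Relation.ReflTransGen.tail ih ⟨τ, hE h1, h2, h3, h4⟩

lemma kv_adj {E : Set (Finset V)} {a b : Cell V} (h : adj C E a b) : b ∈ KV C E a :=
  Relation.ReflTransGen.single h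

lemma kv_good {E : Set (Finset V)} {a : Cell V} (ha : Good C a) :
    ∀ c ∈ KV C E a, Good C c := by
  intro c hc
  induction hc with
  | refl => exact ha
  | tail _ hbc _ =>
    obtain ⟨τ, _, _, hf, _⟩ := hbc
    exact good_of_face hf

lemma kv_closed {E : Set (Finset V)} {a : Cell V} {T : Set (Cell V)}
    (haT : a ∈ T) (hT : ∀ x ∈ T, ∀ y, adj C E x y → y ∈ T) :
    KV C E a ⊆ T := by
  intro c hc
  induction hc with
  | refl => exact haT
  | tail _ hbc ih => exact hT _ ih _ hbc

/-! #### Maxima of finite sets under a strict order -/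

lemma exists_top {α : Type*} (lt : α → α → Prop) (T : Finset α) (hne : T.Nonempty)
    (htot : ∀ a ∈ T, ∀ b ∈ T, a ≠ b → lt a b ∨ lt b a)
    (htr : ∀ a ∈ T, ∀ b ∈ T, ∀ c ∈ T, lt a b → lt b c → lt a c)
    (hirr : ∀ a ∈ T, ¬ lt a a) :
    ∃ m ∈ T, ∀ x ∈ T, x ≠ m → lt x m := by
  classical
  induction T using Finset.induction_on with
  | empty => exact absurd hne (by simp)
  | @insert a s ha ih =>
    rcases s.eq_empty_or_nonempty with rfl | hs
    · exact ⟨a, by simp, by simp⟩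
    · obtain ⟨m, hm, hmax⟩ := ih hs
        (fun x hx y hy => htot x (Finset.mem_insert_of_mem hx) y (Finset.mem_insert_of_mem hy))
        (fun x hx y hy z hz => htr x (Finset.mem_insert_of_mem hx) y
          (Finset.mem_insert_of_mem hy) z (Finset.mem_insert_of_mem hz))
        (fun x hx => hirr x (Finset.mem_insert_of_mem hx))
      have ham : a ≠ m := fun h => ha (h ▸ hm)
      have hmem : m ∈ insert a s := Finset.mem_insert_of_mem hm
      have hamem : a ∈ insert a s := Finset.mem_insert_self a s
      rcases htot a hamem m hmem ham with h | h
      · refine ⟨m, hmem, ?_⟩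
        intro x hx hxm
        rcases Finset.mem_insert.mp hx with rfl | hx'
        · exact h
        · exact hmax x hx' hxm
      · refine ⟨a, hamem, ?_⟩
        intro x hx hxa
        rcases Finset.mem_insert.mp hx with rfl | hx'
        · exact absurd rfl hxa
        · by_cases hxm : x = m
          · exact hxm ▸ h
          · exact htr x (Finset.mem_insert_of_mem hx') m hmem a hamem (hmax x hx' hxm) h

end Aux


section Aux2

variable {C : NComplex V n} {ql : Finset V → ℝ} {qs : Finset V → Finset V → Prop}

/-- accessors for `IsOWL` -/
lemma owl_lev (hq : IsOWL C ql qs) : IsLevelFun C ql := hq.1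
lemma owl_irrefl (hq : IsOWL C ql qs) {σ : Finset V} (h : σ ∈ C.X) : ¬ qs σ σ :=
  hq.2.1 σ h
lemma owl_trans (hq : IsOWL C ql qs) {a b c : Finset V} (ha : a ∈ C.X) (hb : b ∈ C.X)
    (hc : c ∈ C.X) : qs a b → qs b c → qs a c := hq.2.2.1 a ha b hb c hc
lemma owl_total (hq : IsOWL C ql qs) {a b : Finset V} (ha : a ∈ C.X) (hb : b ∈ C.X)
    (hne : a ≠ b) : qs a b ∨ qs b a := hq.2.2.2.1 a ha b hb hne
lemma owl_lev_mono (hq : IsOWL C ql qs) {a b : Finset V} (ha : a ∈ C.X) (hb : b ∈ C.X)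
    (h : qs a b) : ql a ≤ ql b := hq.2.2.2.2.1 a ha b hb h
lemma owl_ssub (hq : IsOWL C ql qs) {a b : Finset V} (ha : a ∈ C.X) (hb : b ∈ C.X)
    (h : a ⊂ b) : qs a b := hq.2.2.2.2.2 a ha b hb h

lemma slt_of_lev_lt (hq : IsOWL C ql qs) {a b : Finset V} (ha : a ∈ C.X) (hb : b ∈ C.X)
    (h : ql a < ql b) : qs a b := by
  have hne : a ≠ b := fun e => absurd (e ▸ h) (lt_irrefl _)
  rcases owl_total hq ha hb hne with h' | h'
  · exact h'
  · exact absurd (owl_lev_mono hq hb ha h') (not_le.mpr h)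

/-! #### `cslt` lemmas -/

lemma cslt_some_some {a b : Finset V} : cslt qs (some a) (some b) = qs a b := rfl
lemma cslt_some_none {a : Finset V} : cslt qs (some a) none = True := rfl
lemma cslt_none {b : Cell V} : cslt qs none b = False := rfl

lemma cslt_irrefl (hq : IsOWL C ql qs) {c : Cell V} (hc : Good C c) : ¬ cslt qs c c := by
  cases c with
  | none => exact fun h => h
  | some σ => exact owl_irrefl hq (hc σ rfl).1

lemma cslt_trans (hq : IsOWL C ql qs) {a b c : Cell V} (ha : Good C a) (hb : Good C b)
    (hc : Good C c) (h1 : cslt qs a b) (h2 : cslt qs b c) : cslt qs a c := by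
  cases a with
  | none => exact absurd h1 (by exact fun h => h)
  | some σa =>
    cases c with
    | none => trivial
    | some σc =>
      cases b with
      | none => exact absurd h2 (by exact fun h => h)
      | some σb =>
        exact owl_trans hq (ha σa rfl).1 (hb σb rfl).1 (hc σc rfl).1 h1 h2

lemma cslt_total (hq : IsOWL C ql qs) {a b : Cell V} (ha : Good C a) (hb : Good C b)
    (hne : a ≠ b) : cslt qs a b ∨ cslt qs b a := by
  cases a with
  | none =>
    cases b with
    | none => exact absurd rfl hne
    | some σ => exact Or.inr trivial
  | some σa =>
    cases b with
    | none => exact Or.inl trivial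
    | some σb =>
      have : σa ≠ σb := fun h => hne (by rw [h])
      exact owl_total hq (ha σa rfl).1 (hb σb rfl).1 this

/-! #### Edge sets -/

lemma egt_subset_ege {σ₀ : Finset V} : Egt C qs σ₀ ⊆ Ege C qs σ₀ := by
  rintro τ ⟨h1, h2, h3⟩; exact ⟨h1, h2, Or.inr h3⟩

lemma ege_mem_CX {σ₀ τ : Finset V} (h : τ ∈ Ege C qs σ₀) : τ ∈ C.X ∧ τ.card = n :=
  ⟨h.1, h.2.1⟩

/-- the collection of all candidate cells, as a finset -/
noncomputable def cellsFin (C : NComplex V n) : Finset (Cell V) :=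
  insert none (C.X.image some)

lemma good_mem_cellsFin {c : Cell V} (hc : Good C c) : c ∈ cellsFin C := by
  cases c with
  | none => exact Finset.mem_insert_self _ _
  | some σ =>
    exact Finset.mem_insert_of_mem (Finset.mem_image_of_mem some (hc σ rfl).1)

lemma exists_maxCell (hq : IsOWL C ql qs) {K : Set (Cell V)} {c₀ : Cell V}
    (hK : ∀ c ∈ K, Good C c) (hne : c₀ ∈ K) : ∃ m, IsMaxCell qs K m := by
  classical
  set T : Finset (Cell V) := (cellsFin C).filter (· ∈ K) with hT
  have hmemT : ∀ c, c ∈ T ↔ c ∈ K := by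
    intro c
    constructor
    · intro h; exact (Finset.mem_filter.mp h).2
    · intro h; exact Finset.mem_filter.mpr ⟨good_mem_cellsFin (hK c h), h⟩
  have hTne : T.Nonempty := ⟨c₀, (hmemT c₀).mpr hne⟩
  obtain ⟨m, hm, hmax⟩ := exists_top (cslt qs) T hTne
    (fun a haT b hbT hne => cslt_total hq (hK a ((hmemT a).mp haT)) (hK b ((hmemT b).mp hbT)) hne)
    (fun a haT b hbT c hcT => cslt_trans hq (hK a ((hmemT a).mp haT)) (hK b ((hmemT b).mp hbT))
      (hK c ((hmemT c).mp hcT)))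
    (fun a haT => cslt_irrefl hq (hK a ((hmemT a).mp haT)))
  exact ⟨m, (hmemT m).mp hm, fun x hx hxm => hmax x ((hmemT x).mpr hx) hxm⟩

lemma exists_minEdge (hq : IsOWL C ql qs) (T : Finset (Finset V))
    (hsub : ∀ τ ∈ T, τ ∈ C.X) (hne : T.Nonempty) :
    ∃ m ∈ T, ∀ x ∈ T, x ≠ m → qs m x := by
  obtain ⟨m, hm, hmax⟩ := exists_top (fun a b => qs b a) T hne
    (fun a ha b hb hne => (owl_total hq (hsub b hb) (hsub a ha) (Ne.symm hne)))
    (fun a ha b hb c hc h1 h2 => owl_trans hq (hsub c hc) (hsub b hb) (hsub a ha) h2 h1)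
    (fun a ha => owl_irrefl hq (hsub a ha))
  exact ⟨m, hm, fun x hx hxm => hmax x hx hxm⟩

/-! #### splitting a walk at an extra edge -/

lemma kv_split (htwo : TwoCofaces C) {E : Set (Finset V)} {τ : Finset V}
    (hτX : τ ∈ C.X) (hτc : τ.card = n) {c₀ y : Cell V}
    (h : y ∈ KV C (E ∪ {τ}) c₀) :
    y ∈ KV C E c₀ ∨ ∃ u v : Cell V, faceCell C τ u ∧ faceCell C τ v ∧ u ≠ v ∧
      u ∈ KV C E c₀ ∧ y ∈ KV C E v := by
  induction h with
  | refl => exact Or.inl (kv_refl _)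
  | @tail b y _ hby ih =>
    obtain ⟨τ', hτ', fb, fy, hbyne⟩ := hby
    rcases hτ' with hτ'E | hτ'τ
    · rcases ih with hb | ⟨u, v, fu, fv, huv, hu, hbv⟩
      · exact Or.inl (Relation.ReflTransGen.tail hb ⟨τ', hτ'E, fb, fy, hbyne⟩)
      · exact Or.inr ⟨u, v, fu, fv, huv, hu,
          Relation.ReflTransGen.tail hbv ⟨τ', hτ'E, fb, fy, hbyne⟩⟩
    · have hττ' : τ' = τ := hτ'τ
      subst hττ'
      rcases ih with hb | ⟨u, v, fu, fv, huv, hu, hbv⟩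
      · exact Or.inr ⟨b, y, fb, fy, hbyne, hb, kv_refl _⟩
      · -- b and y are the two cofaces of τ', as are u and v
        obtain ⟨c₁, c₂, hc12, hiff⟩ := htwo τ' hτX hτc
        have hb2 : b = c₁ ∨ b = c₂ := (hiff b).mp fb
        have hy2 : y = c₁ ∨ y = c₂ := (hiff y).mp fy
        have hu2 : u = c₁ ∨ u = c₂ := (hiff u).mp fu
        have hv2 : v = c₁ ∨ v = c₂ := (hiff v).mp fv
        have hyuv : y = u ∨ y = v := by
          rcases hy2 with rfl | rfl
          · rcases hu2 with rfl | rfl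
            · exact Or.inl rfl
            · rcases hv2 with rfl | rfl
              · exact Or.inr rfl
              · exact absurd rfl huv
          · rcases hv2 with rfl | rfl
            · rcases hu2 with rfl | rfl
              · exact absurd rfl huv
              · exact Or.inl rfl
            · exact Or.inr rfl
        rcases hyuv with rfl | rfl
        · exact Or.inl hu
        · exact Or.inr ⟨u, y, fu, fy, huv, hu, kv_refl _⟩

end Aux2


section Pers

variable {C : NComplex V n} {ql : Finset V → ℝ} {qs : Finset V → Finset V → Prop}

lemma pers_mem_CX {τ ω₀ : Finset V} (h : IsPersPair C qs τ ω₀) : τ ∈ C.X := h.1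
lemma pers_card {τ ω₀ : Finset V} (h : IsPersPair C qs τ ω₀) : τ.card = n := h.2.1

/-- Lemma C : `ω₀` is the maximum of its own component above `τ`. -/
lemma lemC {τ ω₀ : Finset V} (h : IsPersPair C qs τ ω₀) :
    IsMaxCell qs (KV C (Egt C qs τ) (some ω₀)) (some ω₀) := by
  obtain ⟨_, _, _, _, c₁, c₂, _, _, _, _, m₂, hmax₁, _, _⟩ := h
  have hω : some ω₀ ∈ KV C (Egt C qs τ) c₁ := hmax₁.1
  rwa [← kv_comp_eq hω] at hmax₁

/-- Lemma B : the component of `ω₀` above-or-at `τ` contains a cell larger than `ω₀`. -/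
lemma lemB {τ ω₀ : Finset V} (h : IsPersPair C qs τ ω₀) :
    ∃ m, m ∈ KV C (Ege C qs τ) (some ω₀) ∧ cslt qs (some ω₀) m := by
  obtain ⟨hτX, hτc, _, _, c₁, c₂, hc12, f1, f2, _, m₂, hmax₁, hmax₂, hlt⟩ := h
  refine ⟨m₂, ?_, hlt⟩
  have h1 : some ω₀ ∈ KV C (Ege C qs τ) c₁ := kv_mono egt_subset_ege hmax₁.1
  have h2 : m₂ ∈ KV C (Ege C qs τ) c₂ := kv_mono egt_subset_ege hmax₂.1
  have hadj : adj C (Ege C qs τ) c₁ c₂ := ⟨τ, ⟨hτX, hτc, Or.inl rfl⟩, f1, f2, hc12⟩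
  exact kv_trans (kv_trans (kv_symm h1) (kv_adj hadj)) h2

lemma ege_eq_egt_union {τ : Finset V} (hτX : τ ∈ C.X) (hτc : τ.card = n) :
    Ege C qs τ = Egt C qs τ ∪ {τ} := by
  ext τ'
  constructor
  · rintro ⟨h1, h2, h3 | h3⟩
    · exact Or.inr h3
    · exact Or.inl ⟨h1, h2, h3⟩
  · rintro (⟨h1, h2, h3⟩ | h)
    · exact ⟨h1, h2, Or.inr h3⟩
    · have h' : τ' = τ := h
      subst h'
      exact ⟨hτX, hτc, Or.inl rfl⟩

/-- Existence of a persistence pair `(τ, ω₀)` for every order with levels. -/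
lemma pers_exists (hn : 2 ≤ n) (htwo : TwoCofaces C) (hconn : DualConn C)
    (hq : IsOWL C ql qs) {ω₀ : Finset V} (hω : ω₀ ∈ C.X) (hωc : ω₀.card = n + 1) :
    ∃ τ, IsPersPair C qs τ ω₀ := by
  classical
  have hgω : Good C (some ω₀) := good_omega hω hωc
  -- the finset of all (n-1)-simplices
  set Edges : Finset (Finset V) := C.X.filter (fun τ => τ.card = n) with hEdges
  have hEdges_mem : ∀ τ, τ ∈ Edges ↔ τ ∈ C.X ∧ τ.card = n := by
    intro τ; simp [hEdges]
  have hEdges_ne : Edges.Nonempty := by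
    obtain ⟨t, hts, htc⟩ := Finset.exists_subset_card_eq (show n ≤ ω₀.card by omega)
    have htne : t.Nonempty := Finset.card_pos.mp (by omega)
    exact ⟨t, (hEdges_mem t).mpr ⟨C.down_closed ω₀ hω t hts htne, htc⟩⟩
  -- the set of candidate death edges
  set P : Finset (Finset V) :=
    Edges.filter (fun τ => ∃ m ∈ KV C (Ege C qs τ) (some ω₀), cslt qs (some ω₀) m) with hP
  have hP_ne : P.Nonempty := by
    obtain ⟨τm, hτm, hτmin⟩ := exists_minEdge hq Edges
      (fun τ h => ((hEdges_mem τ).mp h).1) hEdges_ne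
    have hfull : {τ | τ ∈ C.X ∧ τ.card = n} ⊆ Ege C qs τm := by
      rintro τ ⟨h1, h2⟩
      by_cases hττ : τ = τm
      · exact ⟨h1, h2, Or.inl hττ⟩
      · exact ⟨h1, h2, Or.inr (hτmin τ ((hEdges_mem τ).mpr ⟨h1, h2⟩) hττ)⟩
    have hnone : (none : Cell V) ∈ KV C (Ege C qs τm) (some ω₀) :=
      kv_mono hfull (hconn (some ω₀) none ⟨hω, hωc⟩ trivial)
    exact ⟨τm, Finset.mem_filter.mpr ⟨hτm, ⟨none, hnone, trivial⟩⟩⟩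
  -- the death edge: the maximum of P
  obtain ⟨τq, hτqP, hτqmax⟩ := exists_top qs P hP_ne
    (fun a ha b hb hne => owl_total hq ((hEdges_mem a).mp (Finset.mem_filter.mp ha).1).1
      ((hEdges_mem b).mp (Finset.mem_filter.mp hb).1).1 hne)
    (fun a ha b hb c hc => owl_trans hq ((hEdges_mem a).mp (Finset.mem_filter.mp ha).1).1
      ((hEdges_mem b).mp (Finset.mem_filter.mp hb).1).1
      ((hEdges_mem c).mp (Finset.mem_filter.mp hc).1).1)
    (fun a ha => owl_irrefl hq ((hEdges_mem a).mp (Finset.mem_filter.mp ha).1).1)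
  have hτqX : τq ∈ C.X := ((hEdges_mem τq).mp (Finset.mem_filter.mp hτqP).1).1
  have hτqc : τq.card = n := ((hEdges_mem τq).mp (Finset.mem_filter.mp hτqP).1).2
  set K : Set (Cell V) := KV C (Egt C qs τq) (some ω₀) with hK
  have hKgood : ∀ c ∈ K, Good C c := kv_good hgω
  obtain ⟨M, hMK, hMmax⟩ := exists_maxCell hq hKgood (kv_refl (some ω₀))
  -- the maximum of K is ω₀
  have hMω : M = some ω₀ := by
    by_contra hMne
    have hltM : cslt qs (some ω₀) M := hMmax (some ω₀) (kv_refl _) (Ne.symm hMne)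
    -- extract some edge of the component
    rcases Relation.ReflTransGen.cases_head hMK with heq | ⟨b, hadj, _⟩
    · exact hMne heq.symm
    · obtain ⟨τh, hτhE, _, _, _⟩ := hadj
      set T' : Finset (Finset V) := Edges.filter (fun τ => τ ∈ Egt C qs τq) with hT'
      have hT'mem : ∀ τ, τ ∈ T' ↔ τ ∈ Egt C qs τq := by
        intro τ
        constructor
        · intro h; exact (Finset.mem_filter.mp h).2
        · intro h; exact Finset.mem_filter.mpr ⟨(hEdges_mem τ).mpr ⟨h.1, h.2.1⟩, h⟩
      obtain ⟨τmin, hτminT, hτminmin⟩ := exists_minEdge hq T'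
        (fun τ h => ((hT'mem τ).mp h).1) ⟨τh, (hT'mem τh).mpr hτhE⟩
      have hτminE : τmin ∈ Egt C qs τq := (hT'mem τmin).mp hτminT
      have hsub : Egt C qs τq ⊆ Ege C qs τmin := by
        intro τ hτ
        by_cases hττ : τ = τmin
        · exact ⟨hτ.1, hτ.2.1, Or.inl hττ⟩
        · exact ⟨hτ.1, hτ.2.1, Or.inr (hτminmin τ ((hT'mem τ).mpr hτ) hττ)⟩
      have hMin : M ∈ KV C (Ege C qs τmin) (some ω₀) := kv_mono hsub hMK
      have hτminP : τmin ∈ P := Finset.mem_filter.mpr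
        ⟨(hEdges_mem τmin).mpr ⟨hτminE.1, hτminE.2.1⟩, ⟨M, hMin, hltM⟩⟩
      rcases eq_or_ne τmin τq with rfl | hne
      · exact owl_irrefl hq hτqX hτminE.2.2
      · exact owl_irrefl hq hτqX
          (owl_trans hq hτqX hτminE.1 hτqX hτminE.2.2 (hτqmax τmin hτminP hne))
  subst hMω
  -- τq ∈ P gives the witness m°
  obtain ⟨m0, hm0, hm0lt⟩ := (Finset.mem_filter.mp hτqP).2
  have hm0good : Good C m0 := kv_good hgω m0 hm0
  have hm0K : m0 ∉ K := by
    intro hmem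
    rcases eq_or_ne m0 (some ω₀) with rfl | hne
    · exact cslt_irrefl hq hgω hm0lt
    · exact cslt_irrefl hq hgω
        (cslt_trans hq hgω hm0good hgω hm0lt (hMmax m0 hmem hne))
  rw [ege_eq_egt_union hτqX hτqc] at hm0
  rcases kv_split htwo hτqX hτqc hm0 with h | ⟨u, v, fu, fv, huv, hu, hm0v⟩
  · exact absurd h hm0K
  -- assemble
  have hvK : v ∉ K := by
    intro hvmem
    exact hm0K (kv_trans hvmem hm0v)
  have hKu : KV C (Egt C qs τq) u = K := kv_comp_eq hu
  obtain ⟨m₂, hm₂⟩ := exists_maxCell hq (kv_good (good_of_face fv))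
    (kv_refl v)
  refine ⟨τq, hτqX, hτqc, hω, hωc, u, v, huv, fu, fv, ?_, m₂, ?_, hm₂, ?_⟩
  · rw [hKu]; exact hvK
  · rw [hKu]; exact ⟨kv_refl _, fun x hx hxne => hMmax x hx hxne⟩
  · have hm0m₂ : m0 = m₂ ∨ cslt qs m0 m₂ := by
      rcases eq_or_ne m0 m₂ with h | h
      · exact Or.inl h
      · exact Or.inr (hm₂.2 m0 hm0v h)
    rcases hm0m₂ with rfl | h
    · exact hm0lt
    · exact cslt_trans hq hgω hm0good (kv_good (good_of_face fv) m₂ hm₂.1) hm0lt h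

end Pers


section Death

variable {C : NComplex V n} {rlev ql : Finset V → ℝ}
  {rslt qs : Finset V → Finset V → Prop} {τ₀ ω₀ : Finset V} {ε : ℝ}

lemma elev_subset_egt_r (hr : IsOWL C rlev rslt) (hτ₀X : τ₀ ∈ C.X) (hε : 0 < ε) :
    Elev C rlev (rlev τ₀ + ε) ⊆ Egt C rslt τ₀ := by
  rintro τ ⟨hX, hc, hlev⟩
  exact ⟨hX, hc, slt_of_lev_lt hr hτ₀X hX (by linarith)⟩

/-- every cell of the stable volume is at most `ω₀` in the order `r`. -/
lemma sv_max (hr : IsOWL C rlev rslt) (hpair : IsPersPair C rslt τ₀ ω₀) (hε : 0 < ε) :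
    ∀ m ∈ KV C (Elev C rlev (rlev τ₀ + ε)) (some ω₀),
      m = some ω₀ ∨ cslt rslt m (some ω₀) := by
  intro m hm
  rcases eq_or_ne m (some ω₀) with rfl | hne
  · exact Or.inl rfl
  · exact Or.inr ((lemC hpair).2 m
      (kv_mono (elev_subset_egt_r hr hpair.1 hε) hm) hne)

/-- the key upper bound on the level of the death edge of `ω₀` for any `q ∈ R_ε`. -/
lemma death_lt (hr : IsOWL C rlev rslt) (hpair : IsPersPair C rslt τ₀ ω₀) (hε : 0 < ε)
    (hq : IsOWL C ql qs) (hclose : ∀ σ ∈ C.X, |ql σ - rlev σ| < ε / 2)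
    (hord : ∀ σ ∈ C.X, rslt σ ω₀ → qs σ ω₀)
    {τq : Finset V} (hpp : IsPersPair C qs τq ω₀) :
    ql τq < rlev τ₀ + ε / 2 := by
  by_contra hcon
  push_neg at hcon
  have hωX : ω₀ ∈ C.X := hpair.2.2.1
  have hωc : ω₀.card = n + 1 := hpair.2.2.2.1
  have hgω : Good C (some ω₀) := good_omega hωX hωc
  have hsub : Ege C qs τq ⊆ Egt C rslt τ₀ := by
    rintro τ ⟨h1, h2, h3⟩
    have hql : ql τq ≤ ql τ := by
      rcases h3 with rfl | h3
      · exact le_refl _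
      · exact owl_lev_mono hq (pers_mem_CX hpp) h1 h3
    have habs := abs_lt.mp (hclose τ h1)
    have hlt : rlev τ₀ < rlev τ := by linarith [habs.1, habs.2]
    exact ⟨h1, h2, slt_of_lev_lt hr (pers_mem_CX hpair) h1 hlt⟩
  obtain ⟨m, hm, hmlt⟩ := lemB hpp
  have hmgood : Good C m := kv_good hgω m (kv_mono hsub hm)
  have hmK : m ∈ KV C (Egt C rslt τ₀) (some ω₀) := kv_mono hsub hm
  have hmne : m ≠ some ω₀ := by
    rintro rfl
    exact cslt_irrefl hq hgω hmlt
  have hmax := (lemC hpair).2 m hmK hmne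
  cases m with
  | none => exact hmax
  | some σ =>
    have hσX : σ ∈ C.X := (hmgood σ rfl).1
    exact owl_irrefl hq hωX (owl_trans hq hωX hσX hωX hmlt (hord σ hσX hmax))

/-- all edges of level at least `rlev τ₀ + ε` lie strictly above the death edge. -/
lemma elev_subset_egt_q (hr : IsOWL C rlev rslt) (hpair : IsPersPair C rslt τ₀ ω₀)
    (hε : 0 < ε) (hq : IsOWL C ql qs) (hclose : ∀ σ ∈ C.X, |ql σ - rlev σ| < ε / 2)
    (hord : ∀ σ ∈ C.X, rslt σ ω₀ → qs σ ω₀)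
    {τq : Finset V} (hpp : IsPersPair C qs τq ω₀) :
    Elev C rlev (rlev τ₀ + ε) ⊆ Egt C qs τq := by
  rintro τ ⟨hX, hc, hlev⟩
  have habs := abs_lt.mp (hclose τ hX)
  have hd := death_lt hr hpair hε hq hclose hord hpp
  exact ⟨hX, hc, slt_of_lev_lt hq (pers_mem_CX hpp) hX (by linarith [habs.1, habs.2])⟩

end Death


section Pert

variable {C : NComplex V n} {rlev : Finset V → ℝ} {rslt : Finset V → Finset V → Prop}
  {η : ℝ} {A : Set (Finset V)}

lemma pertLev_le (hη : 0 ≤ η) (σ : Finset V) : pertLev C rlev η A σ ≤ rlev σ + η := by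
  unfold pertLev
  split
  · exact le_refl _
  · linarith

lemma pertLev_ge (hη : 0 ≤ η) (σ : Finset V) : rlev σ - η ≤ pertLev C rlev η A σ := by
  unfold pertLev
  split
  · linarith
  · exact le_refl _

lemma pertLev_pos {σ : Finset V} (h : (σ ∈ C.X ∧ σ.card = n + 1) ∨ σ ∈ A) :
    pertLev C rlev η A σ = rlev σ + η := if_pos h

lemma pertLev_neg {σ : Finset V} (h : ¬ ((σ ∈ C.X ∧ σ.card = n + 1) ∨ σ ∈ A)) :
    pertLev C rlev η A σ = rlev σ - η := if_neg h

lemma pertLev_top {σ : Finset V} (h1 : σ ∈ C.X) (h2 : σ.card = n + 1) :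
    pertLev C rlev η A σ = rlev σ + η := if_pos (Or.inl ⟨h1, h2⟩)

lemma pertLev_A {σ : Finset V} (h : σ ∈ A) : pertLev C rlev η A σ = rlev σ + η :=
  if_pos (Or.inr h)

lemma pertLev_low {σ : Finset V} (h1 : σ.card = n) (h2 : σ ∉ A) :
    pertLev C rlev η A σ = rlev σ - η := by
  refine if_neg ?_
  rintro (⟨_, hc⟩ | hA)
  · omega
  · exact h2 hA

lemma pert_levelFun (hr : IsOWL C rlev rslt)
    (hA : A ⊆ {τ | τ ∈ C.X ∧ τ.card = n}) (hη : 0 ≤ η) :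
    IsLevelFun C (pertLev C rlev η A) := by
  intro σ hσ σ' hσ' hss
  have hle : rlev σ ≤ rlev σ' := hr.1 σ hσ σ' hσ' hss
  have hcard : σ.card < σ'.card := Finset.card_lt_card hss
  by_cases h' : (σ' ∈ C.X ∧ σ'.card = n + 1) ∨ σ' ∈ A
  · rw [pertLev_pos h']
    calc pertLev C rlev η A σ ≤ rlev σ + η := pertLev_le hη σ
    _ ≤ rlev σ' + η := by linarith
  · rw [pertLev_neg h']
    have hσA : ¬ ((σ ∈ C.X ∧ σ.card = n + 1) ∨ σ ∈ A) := by
      rintro (⟨_, hc⟩ | hA')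
      · have := card_le_of_mem hσ'
        omega
      · have hcσ : σ.card = n := (hA hA').2
        have hc' : σ'.card = n + 1 := by
          have := card_le_of_mem hσ'
          omega
        exact h' (Or.inl ⟨hσ', hc'⟩)
    rw [pertLev_neg hσA]
    linarith

lemma pert_owl (hr : IsOWL C rlev rslt)
    (hA : A ⊆ {τ | τ ∈ C.X ∧ τ.card = n}) (hη : 0 ≤ η) :
    IsOWL C (pertLev C rlev η A) (pertSlt C rlev rslt η A) := by
  refine ⟨pert_levelFun hr hA hη, ?_, ?_, ?_, ?_, ?_⟩
  · rintro σ hσ (h | ⟨_, h⟩)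
    · exact lt_irrefl _ h
    · exact owl_irrefl hr hσ h
  · rintro a ha b hb c hc (h1 | ⟨e1, h1⟩) (h2 | ⟨e2, h2⟩)
    · exact Or.inl (h1.trans h2)
    · exact Or.inl (e2 ▸ h1)
    · exact Or.inl (e1 ▸ h2)
    · exact Or.inr ⟨e1.trans e2, owl_trans hr ha hb hc h1 h2⟩
  · intro a ha b hb hne
    rcases lt_trichotomy (pertLev C rlev η A a) (pertLev C rlev η A b) with h | h | h
    · exact Or.inl (Or.inl h)
    · rcases owl_total hr ha hb hne with h' | h'
      · exact Or.inl (Or.inr ⟨h, h'⟩)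
      · exact Or.inr (Or.inr ⟨h.symm, h'⟩)
    · exact Or.inr (Or.inl h)
  · rintro a _ b _ (h | ⟨h, _⟩)
    · exact le_of_lt h
    · exact le_of_eq h
  · intro a ha b hb hss
    rcases lt_or_eq_of_le (pert_levelFun hr hA hη a ha b hb hss) with h | h
    · exact Or.inl h
    · exact Or.inr ⟨h, owl_ssub hr ha hb hss⟩

lemma pert_inR (hr : IsOWL C rlev rslt) {ω₀ : Finset V} {ε : ℝ}
    (hωX : ω₀ ∈ C.X) (hωc : ω₀.card = n + 1)
    (hA : A ⊆ {τ | τ ∈ C.X ∧ τ.card = n}) (hη0 : 0 ≤ η) (hηε : η < ε / 2) :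
    InR C rlev rslt ω₀ ε (pertLev C rlev η A) (pertSlt C rlev rslt η A) := by
  refine ⟨pert_owl hr hA hη0, ?_, ?_⟩
  · intro σ _
    unfold pertLev
    split <;> rw [abs_lt] <;> constructor <;> linarith
  · intro σ hσ h
    have h1 : pertLev C rlev η A σ ≤ pertLev C rlev η A ω₀ := by
      rw [pertLev_top hωX hωc]
      calc pertLev C rlev η A σ ≤ rlev σ + η := pertLev_le hη0 σ
      _ ≤ rlev ω₀ + η := by linarith [owl_lev_mono hr hσ hωX h]
    rcases lt_or_eq_of_le h1 with h2 | h2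
    · exact Or.inl h2
    · exact Or.inr ⟨h2, h⟩

/-- the perturbation preserves the order between `n`-cells. -/
lemma pert_preserve (hr : IsOWL C rlev rslt) {a b : Cell V}
    (ha : Good C a) (hb : Good C b) (h : cslt rslt a b) :
    cslt (pertSlt C rlev rslt η A) a b := by
  cases a with
  | none => exact absurd h (by exact fun h => h)
  | some σa =>
    cases b with
    | none => trivial
    | some σb =>
      have haX := ha σa rfl
      have hbX := hb σb rfl
      show pertSlt C rlev rslt η A σa σb
      rw [pertSlt, pertLev_top haX.1 haX.2, pertLev_top hbX.1 hbX.2]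
      rcases lt_or_eq_of_le (owl_lev_mono hr haX.1 hbX.1 h) with h' | h'
      · exact Or.inl (by linarith)
      · exact Or.inr ⟨by rw [h'], h⟩

end Pert


section Path

variable {C : NComplex V n} {E E' : Set (Finset V)} {x m : Cell V}
  {vs : List (Cell V)} {es : List (Finset V)}

lemma path_head (h : IsPath C E x m vs es) : ∃ rest, vs = x :: rest := by
  cases h with
  | nil => exact ⟨[], rfl⟩
  | cons _ _ _ _ _ => exact ⟨_, rfl⟩

lemma path_edges_mem (h : IsPath C E x m vs es) : ∀ e ∈ es, e ∈ E := by
  induction h with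
  | nil => simp
  | cons hτE _ _ _ _ ih =>
    intro e he
    rcases List.mem_cons.mp he with rfl | he'
    · exact hτE
    · exact ih e he'

lemma path_edge_faces (h : IsPath C E x m vs es) :
    ∀ e ∈ es, ∃ a b : Cell V, a ∈ vs ∧ b ∈ vs ∧ faceCell C e a ∧ faceCell C e b ∧ a ≠ b := by
  induction h with
  | nil => simp
  | @cons c c' c'' vs' es' τ hτE hfc hfc' hne P ih =>
    intro e he
    rcases List.mem_cons.mp he with rfl | he'
    · obtain ⟨rest, hrest⟩ := path_head P
      exact ⟨c, c', List.mem_cons_self, by rw [hrest]; simp, hfc, hfc', hne⟩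
    · obtain ⟨a, b, ha, hb, h1, h2, h3⟩ := ih e he'
      exact ⟨a, b, List.mem_cons_of_mem _ ha, List.mem_cons_of_mem _ hb, h1, h2, h3⟩

lemma path_to_kv (h : IsPath C E x m vs es) (hsub : ∀ e ∈ es, e ∈ E') :
    m ∈ KV C E' x := by
  induction h with
  | nil => exact kv_refl _
  | @cons c c' c'' vs' es' τ hτE hfc hfc' hne P ih =>
    have hstep : adj C E' c c' := ⟨τ, hsub τ List.mem_cons_self, hfc, hfc', hne⟩
    exact kv_trans (kv_adj hstep) (ih (fun e he => hsub e (List.mem_cons_of_mem _ he)))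

lemma kv_to_path (h : m ∈ KV C E x) : ∃ vs es, IsPath C E x m vs es := by
  induction h using Relation.ReflTransGen.head_induction_on with
  | refl => exact ⟨[m], [], IsPath.nil m⟩
  | head hadj _ ih =>
    obtain ⟨vs, es, P⟩ := ih
    obtain ⟨τ, hτE, h1, h2, h3⟩ := hadj
    exact ⟨_, _, IsPath.cons hτE h1 h2 h3 P⟩

lemma path_tail_mem (h : IsPath C E x m vs es) {y : Cell V} (hy : y ∈ vs) :
    y = x ∨ ∃ vs' es', IsPath C E y m vs' es' ∧ es'.length < es.length := by
  induction h with
  | nil =>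
    rcases List.mem_singleton.mp hy with rfl
    exact Or.inl rfl
  | @cons c c' c'' vs' es' τ hτE hfc hfc' hne P ih =>
    rcases List.mem_cons.mp hy with rfl | hy'
    · exact Or.inl rfl
    · rcases ih hy' with rfl | ⟨vs'', es'', P'', hlen⟩
      · exact Or.inr ⟨_, _, P, by simp⟩
      · exact Or.inr ⟨vs'', es'', P'', by simp; omega⟩

end Path


section MainInd

variable {C : NComplex V n}

set_option maxHeartbeats 2000000 in
/-- Core of the `⊇` direction: walking along a path from `ω₀` to a cell larger than
`ω₀` inside `G(⪰_r τ₀)`, no cell of `⋂ OV` outside the stable volume can exist. -/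
lemma main_ind (htwo : TwoCofaces C)
    {rlev : Finset V → ℝ} {rslt : Finset V → Finset V → Prop}
    (hr : IsOWL C rlev rslt) {τ₀ ω₀ : Finset V}
    (hpair : IsPersPair C rslt τ₀ ω₀) {ε : ℝ} (hε : 0 < ε)
    {η : ℝ} (hη0 : 0 < η) (hηε : η < ε / 2)
    (hgap : ∀ σ ∈ C.X, rlev τ₀ + 2 * η ≤ rlev σ → rlev τ₀ + ε ≤ rlev σ)
    {c : Cell V}
    (hcall : ∀ ql qsl, InR C rlev rslt ω₀ ε ql qsl → c ∈ OV C qsl ω₀)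
    (hcSV : c ∉ KV C (Elev C rlev (rlev τ₀ + ε)) (some ω₀))
    (hgc : Good C c)
    (hZB : ∀ m ∈ KV C (Elev C rlev (rlev τ₀ + ε)) c, ¬ cslt rslt (some ω₀) m) :
    ∀ k (es : List (Finset V)) (vs : List (Cell V)) (x m₂ : Cell V),
      es.length ≤ k →
      IsPath C (Ege C rslt τ₀) x m₂ vs es →
      cslt rslt (some ω₀) m₂ →
      (x ∈ KV C (Elev C rlev (rlev τ₀ + ε)) (some ω₀) ∨
        x ∈ KV C (Elev C rlev (rlev τ₀ + ε)) c) → False := by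
  have hωX : ω₀ ∈ C.X := hpair.2.2.1
  have hωc : ω₀.card = n + 1 := hpair.2.2.2.1
  have hgω : Good C (some ω₀) := good_omega hωX hωc
  -- the case of a trivial path
  have hnil : ∀ x : Cell V,
      cslt rslt (some ω₀) x →
      (x ∈ KV C (Elev C rlev (rlev τ₀ + ε)) (some ω₀) ∨
        x ∈ KV C (Elev C rlev (rlev τ₀ + ε)) c) → False := by
    intro x hbig hx
    rcases hx with hxSV | hxZ
    · have hgx : Good C x := kv_good hgω x hxSV
      rcases sv_max hr hpair hε x hxSV with rfl | hlt
      · exact cslt_irrefl hr hgω hbig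
      · exact cslt_irrefl hr hgω (cslt_trans hr hgω hgx hgω hbig hlt)
    · exact hZB x hxZ hbig
  intro k
  induction k with
  | zero =>
    intro es vs x m₂ hlen P hbig hx
    cases P with
    | nil => exact hnil _ hbig hx
    | cons _ _ _ _ _ => simp at hlen
  | succ k ih =>
    intro es vs x m₂ hlen P hbig hx
    cases P with
    | nil => exact hnil _ hbig hx
    | @cons _ x' _ vs' es' τ hτE hfx hfx' hxx' P' =>
      by_cases hEx : ∃ y ∈ vs', (y ∈ KV C (Elev C rlev (rlev τ₀ + ε)) (some ω₀) ∨
          y ∈ KV C (Elev C rlev (rlev τ₀ + ε)) c)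
      · obtain ⟨y, hyvs, hy⟩ := hEx
        simp only [List.length_cons] at hlen
        rcases path_tail_mem P' hyvs with rfl | ⟨vs'', es'', P'', hlen''⟩
        · exact ih es' vs' y m₂ (by omega) P' hbig hy
        · exact ih es'' vs'' y m₂ (by omega) P'' hbig hy
      · -- no tail vertex is in `SV` or in the `Elev`-class of `c`
        have hEx' : ∀ y ∈ vs', y ∉ KV C (Elev C rlev (rlev τ₀ + ε)) (some ω₀) ∧
            y ∉ KV C (Elev C rlev (rlev τ₀ + ε)) c := by
          intro y hy
          constructor <;> intro hmem <;> exact hEx ⟨y, hy, by tauto⟩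
        have hfP : IsPath C (Ege C rslt τ₀) x m₂ (x :: vs') (τ :: es') :=
          IsPath.cons hτE hfx hfx' hxx' P'
        set B : Set (Finset V) := {e | e ∈ (τ :: es' : List (Finset V))} with hB
        set A : Set (Finset V) := Elev C rlev (rlev τ₀ + ε) ∪ B with hA
        have hAsub : A ⊆ {e | e ∈ C.X ∧ e.card = n} := by
          rintro e (he | he)
          · exact ⟨he.1, he.2.1⟩
          · have h := path_edges_mem hfP e he
            exact ⟨h.1, h.2.1⟩
        have hq : IsOWL C (pertLev C rlev η A) (pertSlt C rlev rslt η A) :=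
          pert_owl hr hAsub (le_of_lt hη0)
        have hInR : InR C rlev rslt ω₀ ε (pertLev C rlev η A) (pertSlt C rlev rslt η A) :=
          pert_inR hr hωX hωc hAsub (le_of_lt hη0) hηε
        obtain ⟨τq, hppq, hcO⟩ := hcall _ _ hInR
        have hτqX : τq ∈ C.X := hppq.1
        have hτqc : τq.card = n := hppq.2.1
        -- all A-edges have high perturbed level
        have hAlev : ∀ e ∈ A, rlev τ₀ + η ≤ pertLev C rlev η A e := by
          intro e he
          have hre : rlev τ₀ ≤ rlev e := by
            rcases he with he' | he'
            · linarith [he'.2.2]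
            · have h := path_edges_mem hfP e he'
              rcases h.2.2 with rfl | hlt
              · exact le_refl _
              · exact owl_lev_mono hr hpair.1 h.1 hlt
          rw [pertLev_A he]
          linarith
        -- if the death is high, everything at-or-above it is an A-edge
        have hEgeA : rlev τ₀ + η ≤ pertLev C rlev η A τq →
            Ege C (pertSlt C rlev rslt η A) τq ⊆ A := by
          intro hd
          rintro e ⟨heX, hec, hor⟩
          by_contra heA
          have hqe : pertLev C rlev η A e = rlev e - η := pertLev_low hec heA
          have hge : pertLev C rlev η A τq ≤ pertLev C rlev η A e := by
            rcases hor with rfl | h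
            · exact le_refl _
            · exact owl_lev_mono hq hτqX heX h
          have h2 : rlev τ₀ + 2 * η ≤ rlev e := by
            rw [hqe] at hge; linarith
          exact heA (Or.inl ⟨heX, hec, hgap e heX h2⟩)
        -- if the death is low, all A-edges lie strictly above it
        have hAEgt : pertLev C rlev η A τq < rlev τ₀ + η →
            A ⊆ Egt C (pertSlt C rlev rslt η A) τq := by
          intro hd e he
          have heX := hAsub he
          exact ⟨heX.1, heX.2, slt_of_lev_lt hq hτqX heX.1
            (lt_of_lt_of_le hd (hAlev e he))⟩
        have hmaxO := lemC hppq
        rcases hx with hxSV | hxZ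
        · -- x is in the stable volume
          have hgx : Good C x := kv_good hgω x hxSV
          have hgm₂ : Good C m₂ := kv_good hgx m₂ (path_to_kv hfP (path_edges_mem hfP))
          have hbig' : cslt (pertSlt C rlev rslt η A) (some ω₀) m₂ :=
            pert_preserve hr hgω hgm₂ hbig
          have hm₂ne : m₂ ≠ some ω₀ := by
            rintro rfl
            exact cslt_irrefl hr hgω hbig
          have hm₂R : m₂ ∈ KV C A (some ω₀) := by
            have h1 : x ∈ KV C A (some ω₀) := kv_mono Set.subset_union_left hxSV
            have h2 : m₂ ∈ KV C A x := path_to_kv hfP (fun e he => Or.inr he)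
            exact kv_trans h1 h2
          have hd : rlev τ₀ + η ≤ pertLev C rlev η A τq := by
            by_contra hd'
            push_neg at hd'
            have hm₂O : m₂ ∈ KV C (Egt C (pertSlt C rlev rslt η A) τq) (some ω₀) :=
              kv_mono (hAEgt hd') hm₂R
            exact cslt_irrefl hq hgω (cslt_trans hq hgω hgm₂ hgω hbig'
              (hmaxO.2 m₂ hm₂O hm₂ne))
          have hOA : KV C (Egt C (pertSlt C rlev rslt η A) τq) (some ω₀) ⊆
              KV C A (some ω₀) :=
            kv_mono (fun e he => hEgeA hd (egt_subset_ege he))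
          -- reachability in `G(Elev ∪ B)` is confined to Elev-classes of path vertices
          have hT : KV C A (some ω₀) ⊆ {y | y ∈ KV C (Elev C rlev (rlev τ₀ + ε)) (some ω₀) ∨
              ∃ v ∈ (x :: vs' : List (Cell V)), y ∈ KV C (Elev C rlev (rlev τ₀ + ε)) v} := by
            apply kv_closed (Or.inl (kv_refl _))
            rintro a haT b hadj
            obtain ⟨e, heA, hfa, hfb, hab⟩ := hadj
            rcases heA with heE | heB
            · rcases haT with haSV | ⟨v, hv, hav⟩
              · exact Or.inl (Relation.ReflTransGen.tail haSV ⟨e, heE, hfa, hfb, hab⟩)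
              · exact Or.inr ⟨v, hv, Relation.ReflTransGen.tail hav ⟨e, heE, hfa, hfb, hab⟩⟩
            · obtain ⟨a', b', ha', hb', hfa', hfb', hne'⟩ := path_edge_faces hfP e heB
              have heX := path_edges_mem hfP e heB
              obtain ⟨c₁, c₂, h12, hiff⟩ := htwo e heX.1 heX.2.1
              have hbv : b = a' ∨ b = b' := by
                rcases (hiff a').mp hfa' with rfl | rfl <;>
                  rcases (hiff b').mp hfb' with rfl | rfl <;>
                  rcases (hiff b).mp hfb with rfl | rfl <;> tauto
              rcases hbv with rfl | rfl
              · exact Or.inr ⟨b, ha', kv_refl _⟩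
              · exact Or.inr ⟨b, hb', kv_refl _⟩
          rcases hT (hOA hcO) with hcSV' | ⟨v, hv, hcv⟩
          · exact hcSV hcSV'
          · have hvZ : v ∈ KV C (Elev C rlev (rlev τ₀ + ε)) c := kv_symm hcv
            rcases List.mem_cons.mp hv with rfl | hv'
            · exact hcSV (kv_trans hxSV hcv)
            · exact (hEx' v hv').2 hvZ
        · -- x is in the Elev-class of c
          have hgx : Good C x := kv_good hgc x hxZ
          have hgm₂ : Good C m₂ := kv_good hgx m₂ (path_to_kv hfP (path_edges_mem hfP))
          have hbig' : cslt (pertSlt C rlev rslt η A) (some ω₀) m₂ :=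
            pert_preserve hr hgω hgm₂ hbig
          have hm₂ne : m₂ ≠ some ω₀ := by
            rintro rfl
            exact cslt_irrefl hr hgω hbig
          have hxSV : x ∉ KV C (Elev C rlev (rlev τ₀ + ε)) (some ω₀) := fun h =>
            hcSV (kv_trans h (kv_symm hxZ))
          -- here the component of ω₀ in G(A) is exactly the stable volume
          have hRS : KV C A (some ω₀) ⊆ KV C (Elev C rlev (rlev τ₀ + ε)) (some ω₀) := by
            apply kv_closed (kv_refl _)
            rintro a haS b hadj
            obtain ⟨e, heA, hfa, hfb, hab⟩ := hadj
            rcases heA with heE | heB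
            · exact Relation.ReflTransGen.tail haS ⟨e, heE, hfa, hfb, hab⟩
            · exfalso
              obtain ⟨a', b', ha', hb', hfa', hfb', hne'⟩ := path_edge_faces hfP e heB
              have heX := path_edges_mem hfP e heB
              obtain ⟨c₁, c₂, h12, hiff⟩ := htwo e heX.1 heX.2.1
              have hav : a = a' ∨ a = b' := by
                rcases (hiff a').mp hfa' with rfl | rfl <;>
                  rcases (hiff b').mp hfb' with rfl | rfl <;>
                  rcases (hiff a).mp hfa with rfl | rfl <;> tauto
              have hafvs : a ∈ (x :: vs' : List (Cell V)) := by
                rcases hav with rfl | rfl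
                · exact ha'
                · exact hb'
              rcases List.mem_cons.mp hafvs with rfl | h'
              · exact hxSV haS
              · exact (hEx' a h').1 haS
          have hd : pertLev C rlev η A τq < rlev τ₀ + η := by
            by_contra hd'
            push_neg at hd'
            obtain ⟨ms, hms, hmslt⟩ := lemB hppq
            have hmsS : ms ∈ KV C (Elev C rlev (rlev τ₀ + ε)) (some ω₀) :=
              hRS (kv_mono (hEgeA hd') hms)
            have hgms : Good C ms := kv_good hgω ms hmsS
            rcases sv_max hr hpair hε ms hmsS with rfl | hlt
            · exact cslt_irrefl hq hgω hmslt
            · cases ms with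
              | none => exact hlt
              | some σ =>
                have hσX : σ ∈ C.X := (hgms σ rfl).1
                have hqσ : pertSlt C rlev rslt η A σ ω₀ := hInR.2.2 σ hσX hlt
                exact owl_irrefl hq hωX (owl_trans hq hωX hσX hωX hmslt hqσ)
          have hsub := hAEgt hd
          have hxO : x ∈ KV C (Egt C (pertSlt C rlev rslt η A) τq) (some ω₀) :=
            kv_trans hcO (kv_mono (fun e he => hsub (Or.inl he)) hxZ)
          have hm₂O : m₂ ∈ KV C (Egt C (pertSlt C rlev rslt η A) τq) (some ω₀) :=
            kv_trans hxO (path_to_kv hfP (fun e he => hsub (Or.inr he)))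
          exact cslt_irrefl hq hgω (cslt_trans hq hgω hgm₂ hgω hbig'
            (hmaxO.2 m₂ hm₂O hm₂ne))

end MainInd

/-- Theorem 3.2, graph-theoretic form: the stable volume is the
intersection of the optimal volumes over all orders with levels in `R_ε`. -/
theorem stable_volume_eq_iInter_optimal_volumes
    (hn : 2 ≤ n) (C : NComplex V n) (htwo : TwoCofaces C) (hconn : DualConn C)
    (rlev : Finset V → ℝ) (rslt : Finset V → Finset V → Prop)
    (hr : IsOWL C rlev rslt)
    (τ₀ ω₀ : Finset V) (hpair : IsPersPair C rslt τ₀ ω₀)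
    (ε : ℝ) (hε : 0 < ε) :
    SV C rlev τ₀ ω₀ ε =
      ⋂ q ∈ {q : (Finset V → ℝ) × (Finset V → Finset V → Prop) |
        InR C rlev rslt ω₀ ε q.1 q.2}, OV C q.2 ω₀ := by
  have hωX : ω₀ ∈ C.X := hpair.2.2.1
  have hωc : ω₀.card = n + 1 := hpair.2.2.2.1
  have hgω : Good C (some ω₀) := good_omega hωX hωc
  have hτ₀X : τ₀ ∈ C.X := hpair.1
  have hcloseR : ∀ σ ∈ C.X, |rlev σ - rlev σ| < ε / 2 := by
    intro σ _
    rw [sub_self, abs_zero]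
    linarith
  have hordR : ∀ σ ∈ C.X, rslt σ ω₀ → rslt σ ω₀ := fun σ _ h => h
  have hrR : InR C rlev rslt ω₀ ε rlev rslt := ⟨hr, hcloseR, hordR⟩
  apply Set.eq_of_subset_of_subset
  · -- the stable volume is contained in every optimal volume
    intro c hc
    simp only [Set.mem_iInter]
    intro q hq
    obtain ⟨hqOWL, hclose, hord⟩ := hq
    obtain ⟨τq, hppq⟩ := pers_exists hn htwo hconn hqOWL hωX hωc
    exact ⟨τq, hppq, kv_mono (elev_subset_egt_q hr hpair hε hqOWL hclose hord hppq) hc⟩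
  · -- the intersection of the optimal volumes is contained in the stable volume
    intro c hc
    simp only [Set.mem_iInter] at hc
    have hcall : ∀ ql qsl, InR C rlev rslt ω₀ ε ql qsl → c ∈ OV C qsl ω₀ :=
      fun ql qsl h => hc ⟨ql, qsl⟩ h
    by_contra hcSV
    obtain ⟨τ', hpp', hcK⟩ := hcall rlev rslt hrR
    have hgc : Good C c := kv_good hgω c hcK
    by_cases hZB : ∀ m ∈ KV C (Elev C rlev (rlev τ₀ + ε)) c, ¬ cslt rslt (some ω₀) m
    · -- main case : build the gap and apply the induction
      have hSne : (C.X.filter (fun σ => rlev σ < rlev τ₀ + ε)).Nonempty :=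
        ⟨τ₀, Finset.mem_filter.mpr ⟨hτ₀X, by linarith⟩⟩
      have hML : (C.X.filter (fun σ => rlev σ < rlev τ₀ + ε)).sup' hSne rlev <
          rlev τ₀ + ε :=
        (Finset.sup'_lt_iff hSne).mpr (fun σ hσ => (Finset.mem_filter.mp hσ).2)
      set M := (C.X.filter (fun σ => rlev σ < rlev τ₀ + ε)).sup' hSne rlev with hMdef
      set δ := min ε (rlev τ₀ + ε - M) with hδdef
      have hδ0 : 0 < δ := lt_min hε (by linarith)
      have hδε : δ ≤ ε := min_le_left _ _
      set η := ε / 2 - δ / 4 with hηdef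
      have hη0 : 0 < η := by rw [hηdef]; linarith
      have hηε : η < ε / 2 := by rw [hηdef]; linarith
      have hgap : ∀ σ ∈ C.X, rlev τ₀ + 2 * η ≤ rlev σ → rlev τ₀ + ε ≤ rlev σ := by
        intro σ hσ h
        by_contra h'
        push_neg at h'
        have hσM : rlev σ ≤ M := Finset.le_sup' rlev (Finset.mem_filter.mpr ⟨hσ, h'⟩)
        have hδM : δ ≤ rlev τ₀ + ε - M := min_le_right _ _
        have h2 : rlev τ₀ + 2 * η = rlev τ₀ + ε - δ / 2 := by rw [hηdef]; ring
        clear_value δ η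
        linarith
      obtain ⟨m₂, hm₂, hm₂big⟩ := lemB hpair
      obtain ⟨vs, es, P⟩ := kv_to_path hm₂
      exact main_ind htwo hr hpair hε hη0 hηε hgap hcall hcSV hgc hZB
        es.length es vs (some ω₀) m₂ (le_refl _) P hm₂big (Or.inl (kv_refl _))
    · -- degenerate case : the Elev-class of `c` contains a cell above `ω₀`
      push_neg at hZB
      obtain ⟨m, hmZ, hmbig⟩ := hZB
      have hsub' : Elev C rlev (rlev τ₀ + ε) ⊆ Egt C rslt τ' :=
        elev_subset_egt_q hr hpair hε hr hcloseR hordR hpp'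
      have hmO : m ∈ KV C (Egt C rslt τ') (some ω₀) := kv_trans hcK (kv_mono hsub' hmZ)
      have hgm : Good C m := kv_good hgω m hmO
      have hmne : m ≠ some ω₀ := by
        rintro rfl
        exact cslt_irrefl hr hgω hmbig
      exact cslt_irrefl hr hgω
        (cslt_trans hr hgω hgm hgω hmbig ((lemC hpp').2 m hmO hmne))

end StableVol
end

section
/- Theorem (the paper's Theorem 4.2: the stable volume by optimization coincides with the stable volume). Let r be an order with levels on X, let (τ₀, ω₀) be a persistence pair of r, and let ε > 0. Then the chain z₁ := ω₀ + Σ_{ω ∈ K_V(G(r̂ ≥ r̂(τ₀)+ε), ω₀), ω ≠ ω₀} ω is a feasible chain and is the unique minimizer of ‖z‖₀ among all feasible chains; in particular, the support of the ‖·‖₀-minimal feasible chain (the stable volume by optimization) equals the stable volume SV_ε(r, τ₀, ω₀). -/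
open scoped Classical

namespace StableVol

variable {V : Type*} [DecidableEq V] {n : ℕ}

section Helpers

variable {C : NComplex V n} {rlev : Finset V → ℝ} {rslt : Finset V → Finset V → Prop}
  {τ₀ ω₀ : Finset V} {ε : ℝ}

lemma adj_symm_s1 (C : NComplex V n) (E : Set (Finset V)) : Symmetric (adj C E) := by
  rintro c c' ⟨τ, hτ, h1, h2, h3⟩; exact ⟨τ, hτ, h2, h1, h3.symm⟩

lemma KV_symm_mem {E : Set (Finset V)} {c₀ c : Cell V} (h : c ∈ KV C E c₀) :
    c₀ ∈ KV C E c := (@Relation.ReflTransGen.stdSymm _ _ ⟨fun a b h => adj_symm_s1 C E h⟩).symm _ _ h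

lemma KV_eq_of_mem {E : Set (Finset V)} {c₀ c : Cell V} (h : c ∈ KV C E c₀) :
    KV C E c = KV C E c₀ := by
  ext d
  exact ⟨fun hd => Relation.ReflTransGen.trans h hd,
    fun hd => Relation.ReflTransGen.trans (KV_symm_mem h) hd⟩

lemma Elev_subset_Egt (hr : IsOWL C rlev rslt) (hτ₀ : τ₀ ∈ C.X) (hε : 0 < ε) :
    Elev C rlev (rlev τ₀ + ε) ⊆ Egt C rslt τ₀ := by
  rintro τ ⟨hτX, hcard, hlev⟩
  refine ⟨hτX, hcard, ?_⟩
  have hne : τ₀ ≠ τ := by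
    rintro rfl; linarith
  rcases hr.2.2.2.1 τ₀ hτ₀ τ hτX hne with h | h
  · exact h
  · have := hr.2.2.2.2.1 τ hτX τ₀ hτ₀ h
    linarith

/-- `ω₀` is the maximum cell of its own `G(≻ τ₀)`-component. -/
lemma max_of_pair (hpair : IsPersPair C rslt τ₀ ω₀) :
    IsMaxCell rslt (KV C (Egt C rslt τ₀) (some ω₀)) (some ω₀) := by
  obtain ⟨-, -, -, -, c₁, c₂, -, -, -, -, m₂, hmax₁, -, -⟩ := hpair
  have h := KV_eq_of_mem hmax₁.1
  rw [h]
  exact hmax₁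

lemma SV_subset_KVgt (hr : IsOWL C rlev rslt) (hpair : IsPersPair C rslt τ₀ ω₀)
    (hε : 0 < ε) :
    SV C rlev τ₀ ω₀ ε ⊆ KV C (Egt C rslt τ₀) (some ω₀) := by
  intro c hc
  refine Relation.ReflTransGen.mono ?_ _ _ hc
  rintro a b ⟨τ, hτ, h1, h2, h3⟩
  exact ⟨τ, Elev_subset_Egt hr hpair.1 hε hτ, h1, h2, h3⟩

lemma cslt_of_mem_SV (hr : IsOWL C rlev rslt) (hpair : IsPersPair C rslt τ₀ ω₀)
    (hε : 0 < ε) {c : Cell V} (hc : c ∈ SV C rlev τ₀ ω₀ ε) (hne : c ≠ some ω₀) :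
    cslt rslt c (some ω₀) :=
  (max_of_pair hpair).2 c (SV_subset_KVgt hr hpair hε hc) hne

lemma none_not_mem_SV (hr : IsOWL C rlev rslt) (hpair : IsPersPair C rslt τ₀ ω₀)
    (hε : 0 < ε) : (none : Cell V) ∉ SV C rlev τ₀ ω₀ ε := by
  intro h
  exact cslt_of_mem_SV hr hpair hε h (by simp)

lemma slt_of_mem_SV (hr : IsOWL C rlev rslt) (hpair : IsPersPair C rslt τ₀ ω₀)
    (hε : 0 < ε) {ω : Finset V} (hc : (some ω : Cell V) ∈ SV C rlev τ₀ ω₀ ε)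
    (hne : ω ≠ ω₀) : rslt ω ω₀ :=
  cslt_of_mem_SV hr hpair hε hc (by simpa using hne)

lemma mem_SV_data (hr : IsOWL C rlev rslt) {ω : Finset V}
    (hc : (some ω : Cell V) ∈ SV C rlev τ₀ ω₀ ε) (hne : ω ≠ ω₀) :
    ω ∈ C.X ∧ ω.card = n + 1 ∧ rlev τ₀ + ε ≤ rlev ω := by
  rcases Relation.ReflTransGen.cases_tail hc with h | ⟨b, -, τ, hτ, -, hface, -⟩
  · exact absurd (Option.some_injective _ h) hne
  · obtain ⟨hωX, hωcard, hsub⟩ := hface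
    obtain ⟨hτX, hτcard, hτlev⟩ := hτ
    refine ⟨hωX, hωcard, ?_⟩
    have hss : τ ⊂ ω := by
      rw [Finset.ssubset_iff_subset_ne]
      exact ⟨hsub, fun h => by rw [h, hωcard] at hτcard; omega⟩
    have := hr.1 τ hτX ω hωX hss
    linarith


lemma bsum_pair {τ ω₁ ω₂ : Finset V} (hne : ω₁ ≠ ω₂)
    (h1 : faceCell C τ (some ω₁)) (h2 : faceCell C τ (some ω₂))
    (hface : ∀ c : Cell V, faceCell C τ c ↔ c = some ω₁ ∨ c = some ω₂)
    (z : Finset V → ZMod 2) : bsum C τ z = z ω₁ + z ω₂ := by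
  have hS : C.X.filter (fun ω => ω.card = n + 1 ∧ τ ⊆ ω) = {ω₁, ω₂} := by
    ext ω
    simp only [Finset.mem_filter, Finset.mem_insert, Finset.mem_singleton]
    constructor
    · rintro ⟨hX, hc, hs⟩
      have := (hface (some ω)).1 ⟨hX, hc, hs⟩
      rcases this with h | h <;> [left; right] <;> exact Option.some_injective _ h
    · rintro (rfl | rfl)
      · exact ⟨h1.1, h1.2⟩
      · exact ⟨h2.1, h2.2⟩
  rw [bsum, hS, Finset.sum_pair hne]

lemma bsum_single {τ ω₁ : Finset V}
    (h1 : faceCell C τ (some ω₁))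
    (hface : ∀ c : Cell V, faceCell C τ c ↔ c = some ω₁ ∨ c = none)
    (z : Finset V → ZMod 2) : bsum C τ z = z ω₁ := by
  have hS : C.X.filter (fun ω => ω.card = n + 1 ∧ τ ⊆ ω) = {ω₁} := by
    ext ω
    simp only [Finset.mem_filter, Finset.mem_singleton]
    constructor
    · rintro ⟨hX, hc, hs⟩
      have := (hface (some ω)).1 ⟨hX, hc, hs⟩
      rcases this with h | h
      · exact Option.some_injective _ h
      · exact absurd h (by simp)
    · rintro rfl
      exact ⟨h1.1, h1.2⟩
  rw [bsum, hS, Finset.sum_singleton]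

/-- The two cofaces of an adjacency edge are exactly its endpoints. -/
lemma face_iff_of_adj (htwo : TwoCofaces C) {τ : Finset V} {c c' : Cell V}
    (hτX : τ ∈ C.X) (hτc : τ.card = n) (h1 : faceCell C τ c) (h2 : faceCell C τ c')
    (hne : c ≠ c') : ∀ d : Cell V, faceCell C τ d ↔ d = c ∨ d = c' := by
  obtain ⟨c₁, c₂, h12, hface⟩ := htwo τ hτX hτc
  intro d
  rw [hface d]
  rcases (hface c).1 h1 with rfl | rfl <;> rcases (hface c').1 h2 with rfl | rfl <;> tauto

lemma feasible_one_on_SV (htwo : TwoCofaces C) (hr : IsOWL C rlev rslt)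
    (hpair : IsPersPair C rslt τ₀ ω₀) (hε : 0 < ε)
    {z : Finset V → ZMod 2} (hz : IsFeasible C rlev rslt τ₀ ω₀ ε z) :
    ∀ c ∈ SV C rlev τ₀ ω₀ ε, ∀ ω : Finset V, c = some ω → z ω = 1 := by
  intro c hc
  have hc' : Relation.ReflTransGen (adj C (Elev C rlev (rlev τ₀ + ε))) (some ω₀) c := hc
  clear hc
  induction hc' with
  | refl =>
    rintro ω h
    obtain rfl := Option.some_injective _ h
    exact hz.1
  | @tail b c hab hbc ih =>
    rintro ω rfl
    cases b with
    | none => exact absurd hab (none_not_mem_SV hr hpair hε)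
    | some ω' =>
      have hz' : z ω' = 1 := ih ω' rfl
      obtain ⟨τ, hτ, hf1, hf2, hne⟩ := hbc
      obtain ⟨hτX, hτcard, hτlev⟩ := hτ
      have hX' : ω' ∈ C.X := hf1.1
      have hcard' : ω'.card = n + 1 := hf1.2.1
      have hsub' : τ ⊆ ω' := hf1.2.2
      have hωne : ω' ≠ ω := fun h => hne (by rw [h])
      have hss : τ ⊂ ω' := by
        rw [Finset.ssubset_iff_subset_ne]
        exact ⟨hsub', fun h => by rw [h, hcard'] at hτcard; omega⟩
      have hτω' : rslt τ ω' := hr.2.2.2.2.2 τ hτX ω' hX' hss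
      have hτω₀ : rslt τ ω₀ := by
        by_cases hω' : ω' = ω₀
        · rwa [hω'] at hτω'
        · exact hr.2.2.1 τ hτX ω' hX' ω₀ hpair.2.2.1 hτω'
            (slt_of_mem_SV hr hpair hε hab hω')
      have hb := hz.2.2 τ ⟨hτX, hτcard, hτlev, hτω₀⟩
      have hface := face_iff_of_adj htwo hτX hτcard hf1 hf2 hne
      rw [bsum_pair hωne hf1 hf2 hface z, hz'] at hb
      have : ∀ x : ZMod 2, 1 + x = 0 → x = 1 := by decide
      exact this _ hb

end Helpers

/-- Theorem 4.2: the indicator chain of the stable volume is a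
feasible chain and is the unique `‖·‖₀`-minimizer among feasible chains; in
particular the support of the minimal feasible chain equals the stable volume. -/
theorem stable_volume_by_optimization_eq_stable_volume
    (hn : 2 ≤ n) (C : NComplex V n) (htwo : TwoCofaces C) (hconn : DualConn C)
    (rlev : Finset V → ℝ) (rslt : Finset V → Finset V → Prop)
    (hr : IsOWL C rlev rslt)
    (τ₀ ω₀ : Finset V) (hpair : IsPersPair C rslt τ₀ ω₀)
    (ε : ℝ) (hε : 0 < ε) :
    ∀ z₁ : Finset V → ZMod 2,
      (∀ ω : Finset V,
        z₁ ω = if (some ω : Cell V) ∈ SV C rlev τ₀ ω₀ ε then 1 else 0) →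
      IsFeasible C rlev rslt τ₀ ω₀ ε z₁ ∧
      (∀ z, IsFeasible C rlev rslt τ₀ ω₀ ε z → norm0 C z₁ ≤ norm0 C z) ∧
      (∀ z, IsFeasible C rlev rslt τ₀ ω₀ ε z → norm0 C z = norm0 C z₁ → z = z₁) ∧
      (∀ ω : Finset V, z₁ ω ≠ 0 ↔ (some ω : Cell V) ∈ SV C rlev τ₀ ω₀ ε) := by
  intro z₁ hz₁
  have hz₁iff : ∀ ω : Finset V, z₁ ω ≠ 0 ↔ (some ω : Cell V) ∈ SV C rlev τ₀ ω₀ ε := by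
    intro ω
    rw [hz₁ ω]
    by_cases h : (some ω : Cell V) ∈ SV C rlev τ₀ ω₀ ε <;> simp [h]
  have hω₀SV : (some ω₀ : Cell V) ∈ SV C rlev τ₀ ω₀ ε := Relation.ReflTransGen.refl
  have hz₁ω₀ : z₁ ω₀ = 1 := by rw [hz₁ ω₀, if_pos hω₀SV]
  have hmemX : ∀ ω : Finset V, (some ω : Cell V) ∈ SV C rlev τ₀ ω₀ ε → ω ∈ C.X := by
    intro ω h
    by_cases hne : ω = ω₀
    · subst hne; exact hpair.2.2.1
    · exact (mem_SV_data hr h hne).1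
  have hfeas : IsFeasible C rlev rslt τ₀ ω₀ ε z₁ := by
    refine ⟨hz₁ω₀, ?_, ?_⟩
    · intro ω hne hnF
      rw [hz₁ ω, if_neg]
      intro hSV
      obtain ⟨hX, hcard, hlev⟩ := mem_SV_data hr hSV hne
      exact hnF ⟨hX, hcard, hlev, slt_of_mem_SV hr hpair hε hSV hne⟩
    · intro τ hτF
      obtain ⟨hτX, hτcard, hτlev, hτslt⟩ := hτF
      have hτE : τ ∈ Elev C rlev (rlev τ₀ + ε) := ⟨hτX, hτcard, hτlev⟩
      obtain ⟨c₁, c₂, h12, hface⟩ := htwo τ hτX hτcard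
      have hf1 : faceCell C τ c₁ := (hface c₁).2 (Or.inl rfl)
      have hf2 : faceCell C τ c₂ := (hface c₂).2 (Or.inr rfl)
      cases c₁ with
      | none =>
        cases c₂ with
        | none => exact absurd rfl h12
        | some ω₂ =>
          have hface' : ∀ d : Cell V, faceCell C τ d ↔ d = some ω₂ ∨ d = none := by
            intro d; rw [hface d]; tauto
          rw [bsum_single hf2 hface' z₁, hz₁ ω₂, if_neg]
          intro h
          exact none_not_mem_SV hr hpair hε (h.tail ⟨τ, hτE, hf2, hf1, h12.symm⟩)
      | some ω₁ =>
        cases c₂ with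
        | none =>
          rw [bsum_single hf1 hface z₁, hz₁ ω₁, if_neg]
          intro h
          exact none_not_mem_SV hr hpair hε (h.tail ⟨τ, hτE, hf1, hf2, h12⟩)
        | some ω₂ =>
          have hne : ω₁ ≠ ω₂ := fun h => h12 (by rw [h])
          rw [bsum_pair hne hf1 hf2 hface z₁]
          have hiff : ((some ω₁ : Cell V) ∈ SV C rlev τ₀ ω₀ ε) ↔
              ((some ω₂ : Cell V) ∈ SV C rlev τ₀ ω₀ ε) := by
            constructor
            · intro h; exact h.tail ⟨τ, hτE, hf1, hf2, h12⟩
            · intro h; exact h.tail ⟨τ, hτE, hf2, hf1, h12.symm⟩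
          rw [hz₁ ω₁, hz₁ ω₂]
          by_cases h : (some ω₁ : Cell V) ∈ SV C rlev τ₀ ω₀ ε
          · rw [if_pos h, if_pos (hiff.1 h)]; decide
          · rw [if_neg h, if_neg (fun h' => h (hiff.2 h'))]; rw [add_zero]
  have hone : ∀ z, IsFeasible C rlev rslt τ₀ ω₀ ε z →
      ∀ ω : Finset V, (some ω : Cell V) ∈ SV C rlev τ₀ ω₀ ε → z ω = 1 := by
    intro z hz ω h
    exact feasible_one_on_SV htwo hr hpair hε hz (some ω) h ω rfl
  have hsubset : ∀ z, IsFeasible C rlev rslt τ₀ ω₀ ε z →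
      C.X.filter (fun ω => z₁ ω ≠ 0) ⊆ C.X.filter (fun ω => z ω ≠ 0) := by
    intro z hz ω hω
    rw [Finset.mem_filter] at hω ⊢
    refine ⟨hω.1, ?_⟩
    rw [hone z hz ω ((hz₁iff ω).1 hω.2)]
    exact one_ne_zero
  refine ⟨hfeas, ?_, ?_, hz₁iff⟩
  · intro z hz
    exact Finset.card_le_card (hsubset z hz)
  · intro z hz hcard
    have hset : C.X.filter (fun ω => z₁ ω ≠ 0) = C.X.filter (fun ω => z ω ≠ 0) :=
      Finset.eq_of_subset_of_card_le (hsubset z hz) (le_of_eq hcard)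
    funext ω
    by_cases hX : ω ∈ C.X
    · have h1 : ω ∈ C.X.filter (fun ω => z₁ ω ≠ 0) ↔
          ω ∈ C.X.filter (fun ω => z ω ≠ 0) := by rw [hset]
      simp only [Finset.mem_filter, hX, true_and] at h1
      have hzz : ∀ x y : ZMod 2, (x ≠ 0 ↔ y ≠ 0) → x = y := by decide
      exact hzz _ _ h1.symm
    · have hzω : z ω = 0 :=
        hz.2.1 ω (fun h => hX (h ▸ hpair.2.2.1)) (fun hF => hX hF.1)
      have hz₁ω : z₁ ω = 0 := by
        rw [hz₁ ω, if_neg (fun h => hX (hmemX ω h))]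
      rw [hzω, hz₁ω]

end StableVol
end

section
/- Proposition (the paper's Proposition 4.9: stable volume equals stable sub-volume for the (n−1)st persistent homology). Let r be an order with levels on X, let (τ₀, ω₀) be a persistence pair of r, and let ε > 0. Then the unique ‖·‖₀-minimal sub-feasible chain coincides with the unique ‖·‖₀-minimal feasible chain; i.e., the stable sub-volume of (τ₀, ω₀) with noise bandwidth ε equals the stable volume SV_ε(r, τ₀, ω₀). -/
open scoped Classical

namespace StableVol

variable {V : Type*} [DecidableEq V] {n : ℕ}

/-- A sub-feasible chain: a feasible chain whose coefficients vanish outside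
`F_{ε,n} ∩ OV(r, ω₀)`. -/
def IsSubFeasible (C : NComplex V n) (lev : Finset V → ℝ)
    (slt : Finset V → Finset V → Prop) (τ₀ ω₀ : Finset V) (ε : ℝ)
    (z : Finset V → ZMod 2) : Prop :=
  IsFeasible C lev slt τ₀ ω₀ ε z ∧
  ∀ ω : Finset V, ω ≠ ω₀ → (some ω : Cell V) ∉ OV C slt ω₀ → z ω = 0

private lemma zmod2_eq_one {a : ZMod 2} (h : a ≠ 0) : a = 1 := by
  revert a; decide

private lemma zmod2_add_self (a : ZMod 2) : a + a = 0 := by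
  revert a; decide

private lemma zmod2_eq_of_add_eq_zero {a b : ZMod 2} (h : a + b = 0) : b = a := by
  revert a b; decide

lemma bsum_pair_s3 (C : NComplex V n) (τ : Finset V) (z : Finset V → ZMod 2)
    {ω ω' : Finset V} (hne : ω ≠ ω')
    (hiff : ∀ σ : Finset V, (σ ∈ C.X ∧ σ.card = n + 1 ∧ τ ⊆ σ) ↔ (σ = ω ∨ σ = ω')) :
    bsum C τ z = z ω + z ω' := by
  have hset : C.X.filter (fun σ => σ.card = n + 1 ∧ τ ⊆ σ) = {ω, ω'} := by
    ext σ
    simp only [Finset.mem_filter, Finset.mem_insert, Finset.mem_singleton]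
    constructor
    · rintro ⟨h1, h2⟩
      exact (hiff σ).1 ⟨h1, h2.1, h2.2⟩
    · intro h
      have h' := (hiff σ).2 h
      exact ⟨h'.1, h'.2.1, h'.2.2⟩
  rw [bsum, hset, Finset.sum_pair hne]

lemma bsum_single_s3 (C : NComplex V n) (τ : Finset V) (z : Finset V → ZMod 2)
    {ω : Finset V}
    (hiff : ∀ σ : Finset V, (σ ∈ C.X ∧ σ.card = n + 1 ∧ τ ⊆ σ) ↔ σ = ω) :
    bsum C τ z = z ω := by
  have hset : C.X.filter (fun σ => σ.card = n + 1 ∧ τ ⊆ σ) = {ω} := by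
    ext σ
    simp only [Finset.mem_filter, Finset.mem_singleton]
    constructor
    · rintro ⟨h1, h2⟩
      exact (hiff σ).1 ⟨h1, h2.1, h2.2⟩
    · intro h
      have h' := (hiff σ).2 h
      exact ⟨h'.1, h'.2.1, h'.2.2⟩
  rw [bsum, hset, Finset.sum_singleton]

/-- Proposition 4.9: the `‖·‖₀`-minimal sub-feasible chain
coincides with the `‖·‖₀`-minimal feasible chain; i.e. the stable sub-volume equals
the stable volume `SV_ε(r, τ₀, ω₀)`. -/
theorem stable_subvolume_eq_stable_volume
    (hn : 2 ≤ n) (C : NComplex V n) (htwo : TwoCofaces C) (hconn : DualConn C)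
    (rlev : Finset V → ℝ) (rslt : Finset V → Finset V → Prop)
    (hr : IsOWL C rlev rslt)
    (τ₀ ω₀ : Finset V) (hpair : IsPersPair C rslt τ₀ ω₀)
    (ε : ℝ) (hε : 0 < ε) :
    ∀ z : Finset V → ZMod 2, IsSubFeasible C rlev rslt τ₀ ω₀ ε z →
      (∀ w, IsSubFeasible C rlev rslt τ₀ ω₀ ε w → norm0 C z ≤ norm0 C w) →
      ∀ z' : Finset V → ZMod 2, IsFeasible C rlev rslt τ₀ ω₀ ε z' →
        (∀ w, IsFeasible C rlev rslt τ₀ ω₀ ε w → norm0 C z' ≤ norm0 C w) →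
        z = z' ∧
        (∀ ω : Finset V, z ω ≠ 0 ↔ (some ω : Cell V) ∈ SV C rlev τ₀ ω₀ ε) := by
  intro z hz hzmin z' hz' hz'min
  obtain ⟨hlev, hirr, htrans, htot, hmono, hincl⟩ := id hr
  obtain ⟨hτX, hτcard, hωX, hωcard, c₁, c₂, hc12, hf1, hf2, hsep, m₂, hmax1, hmax2, hlt12⟩ :=
    id hpair
  -- the relevant edge set is contained in `Egt τ₀`
  have hEsub : ∀ τ ∈ Elev C rlev (rlev τ₀ + ε), τ ∈ Egt C rslt τ₀ := by
    rintro τ ⟨hτ1, hτ2, hτ3⟩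
    refine ⟨hτ1, hτ2, ?_⟩
    have hne : τ₀ ≠ τ := by rintro rfl; linarith
    rcases htot τ₀ hτX τ hτ1 hne with h | h
    · exact h
    · exact absurd (hmono τ hτ1 τ₀ hτX h) (by linarith)
  have hadjmono : ∀ c c' : Cell V, adj C (Elev C rlev (rlev τ₀ + ε)) c c' →
      adj C (Egt C rslt τ₀) c c' := by
    rintro c c' ⟨τ, hτ, h1, h2, h3⟩
    exact ⟨τ, hEsub τ hτ, h1, h2, h3⟩
  have hKVsub : ∀ c ∈ SV C rlev τ₀ ω₀ ε, c ∈ KV C (Egt C rslt τ₀) (some ω₀) :=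
    fun c hc => Relation.ReflTransGen.mono hadjmono _ _ hc
  have hKVc₁ : ∀ c ∈ SV C rlev τ₀ ω₀ ε, c ∈ KV C (Egt C rslt τ₀) c₁ :=
    fun c hc => Relation.ReflTransGen.trans hmax1.1 (hKVsub c hc)
  have hnone : (none : Cell V) ∉ SV C rlev τ₀ ω₀ ε := by
    intro h
    exact hmax1.2 none (hKVc₁ none h) (by simp)
  have hmaxprop : ∀ ω : Finset V, (some ω : Cell V) ∈ SV C rlev τ₀ ω₀ ε → ω ≠ ω₀ →
      rslt ω ω₀ := by
    intro ω h hne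
    exact hmax1.2 (some ω) (hKVc₁ _ h) (by simpa using hne)
  -- structure of the cells in the stable volume
  have hcellSV : ∀ c ∈ SV C rlev τ₀ ω₀ ε,
      ∃ ω : Finset V, c = some ω ∧ ω ∈ C.X ∧ ω.card = n + 1 ∧
        (ω = ω₀ ∨ (rslt ω ω₀ ∧ rlev τ₀ + ε ≤ rlev ω)) := by
    intro c hc
    have hc' : Relation.ReflTransGen (adj C (Elev C rlev (rlev τ₀ + ε))) (some ω₀) c := hc
    clear hc
    induction hc' with
    | refl => exact ⟨ω₀, rfl, hωX, hωcard, Or.inl rfl⟩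
    | @tail b c' hab hbc ih =>
      obtain ⟨τ, hτE, hfb, hfc', hnebc⟩ := hbc
      have hc'SV : c' ∈ SV C rlev τ₀ ω₀ ε :=
        Relation.ReflTransGen.tail hab ⟨τ, hτE, hfb, hfc', hnebc⟩
      cases c' with
      | none => exact absurd hc'SV hnone
      | some ω' =>
        obtain ⟨hX', hcard', hsub'⟩ := hfc'
        obtain ⟨hτX', hτcard', hτlev⟩ := hτE
        have hss : τ ⊂ ω' := by
          refine Finset.ssubset_iff_subset_ne.2 ⟨hsub', ?_⟩
          intro h; rw [h] at hτcard'; omega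
        have hlev' : rlev τ ≤ rlev ω' := hlev τ hτX' ω' hX' hss
        by_cases heq : ω' = ω₀
        · exact ⟨ω', rfl, hX', hcard', Or.inl heq⟩
        · exact ⟨ω', rfl, hX', hcard',
            Or.inr ⟨hmaxprop ω' hc'SV heq, le_trans hτlev hlev'⟩⟩
  have hFcell : ∀ ω : Finset V, (some ω : Cell V) ∈ SV C rlev τ₀ ω₀ ε → ω ≠ ω₀ →
      ω ∈ Fcells C rlev rslt τ₀ ω₀ ε := by
    intro ω h hne
    obtain ⟨ω'', heq, hX, hcard, hor⟩ := hcellSV _ h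
    injection heq with heq'; subst heq'
    rcases hor with rfl | ⟨h1, h2⟩
    · exact absurd rfl hne
    · exact ⟨hX, hcard, h2, h1⟩
  -- edges of the stable volume are in `Fedges`
  have hedgeF : ∀ τ, τ ∈ Elev C rlev (rlev τ₀ + ε) → ∀ ω : Finset V, ω ∈ C.X →
      ω.card = n + 1 → τ ⊆ ω → (ω = ω₀ ∨ rslt ω ω₀) →
      τ ∈ Fedges C rlev rslt τ₀ ω₀ ε := by
    rintro τ ⟨hτX', hτcard', hτlev⟩ ω hX hcard hsub hor
    have hss : τ ⊂ ω := by
      refine Finset.ssubset_iff_subset_ne.2 ⟨hsub, ?_⟩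
      intro h; rw [h] at hτcard'; omega
    have h1 : rslt τ ω := hincl τ hτX' ω hX hss
    refine ⟨hτX', hτcard', hτlev, ?_⟩
    rcases hor with rfl | h2
    · exact h1
    · exact htrans τ hτX' ω hX ω₀ hωX h1 h2
  -- the two cofaces of an `(n-1)`-simplex having two simplicial cofaces
  have hcof : ∀ τ ∈ C.X, τ.card = n → ∀ ω ω' : Finset V, ω ≠ ω' →
      faceCell C τ (some ω) → faceCell C τ (some ω') →
      ∀ σ : Finset V, (σ ∈ C.X ∧ σ.card = n + 1 ∧ τ ⊆ σ) ↔ (σ = ω ∨ σ = ω') := by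
    intro τ hτX' hτcard' ω ω' hne hfω hfω' σ
    obtain ⟨d₁, d₂, hd, hiffd⟩ := htwo τ hτX' hτcard'
    have h1 := (hiffd (some ω)).1 hfω
    have h2 := (hiffd (some ω')).1 hfω'
    have hne' : (some ω : Cell V) ≠ some ω' := by simpa using hne
    have hcases : (d₁ = some ω ∧ d₂ = some ω') ∨ (d₁ = some ω' ∧ d₂ = some ω) := by
      rcases h1 with h1 | h1 <;> rcases h2 with h2 | h2
      · exact absurd (h1.trans h2.symm) hne'
      · exact Or.inl ⟨h1.symm, h2.symm⟩
      · exact Or.inr ⟨h2.symm, h1.symm⟩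
      · exact absurd (h1.trans h2.symm) hne'
    rcases hcases with ⟨rfl, rfl⟩ | ⟨rfl, rfl⟩
    · simpa [faceCell] using hiffd (some σ)
    · rw [or_comm]
      simpa [faceCell] using hiffd (some σ)
  -- every feasible chain is `1` on the whole stable volume
  have hlower : ∀ w : Finset V → ZMod 2, IsFeasible C rlev rslt τ₀ ω₀ ε w →
      ∀ c ∈ SV C rlev τ₀ ω₀ ε, ∃ ω : Finset V, c = some ω ∧ w ω = 1 := by
    intro w hw c hc
    have hc' : Relation.ReflTransGen (adj C (Elev C rlev (rlev τ₀ + ε))) (some ω₀) c := hc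
    clear hc
    induction hc' with
    | refl => exact ⟨ω₀, rfl, hw.1⟩
    | @tail b c' hab hbc ih =>
      obtain ⟨ω, rfl, hwω⟩ := ih
      obtain ⟨τ, hτE, hfb, hfc', hnebc⟩ := hbc
      have hbSV : (some ω : Cell V) ∈ SV C rlev τ₀ ω₀ ε := hab
      have hc'SV : c' ∈ SV C rlev τ₀ ω₀ ε :=
        Relation.ReflTransGen.tail hab ⟨τ, hτE, hfb, hfc', hnebc⟩
      obtain ⟨ω', rfl, hX', hcard', hor'⟩ := hcellSV c' hc'SV
      obtain ⟨hbX, hbcard, hbsub⟩ := hfb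
      have hbor : ω = ω₀ ∨ rslt ω ω₀ := by
        rcases hcellSV _ hbSV with ⟨ω'', heq, -, -, hor⟩
        injection heq with heq'; subst heq'
        exact hor.imp id And.left
      have hτF := hedgeF τ hτE ω hbX hbcard hbsub hbor
      obtain ⟨hτF1, hτF2, hτF3, hτF4⟩ := hτF
      have hbs := hw.2.2 τ ⟨hτF1, hτF2, hτF3, hτF4⟩
      have hneωω' : ω ≠ ω' := by
        intro h; exact hnebc (by rw [h])
      have hiff := hcof τ hτF1 hτF2 ω ω' hneωω' ⟨hbX, hbcard, hbsub⟩ hfc'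
      rw [bsum_pair_s3 C τ w hneωω' hiff] at hbs
      exact ⟨ω', rfl, by rw [zmod2_eq_of_add_eq_zero hbs, hwω]⟩
  -- the indicator chain of the stable volume
  set zSV : Finset V → ZMod 2 := fun ω =>
    if ω ∈ C.X ∧ ω.card = n + 1 ∧ (some ω : Cell V) ∈ SV C rlev τ₀ ω₀ ε then 1 else 0
    with hzSVdef
  have hzSVone : ∀ ω : Finset V,
      (ω ∈ C.X ∧ ω.card = n + 1 ∧ (some ω : Cell V) ∈ SV C rlev τ₀ ω₀ ε) → zSV ω = 1 := by
    intro ω h; rw [hzSVdef]; simp only []; exact if_pos h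
  have hzSVzero : ∀ ω : Finset V,
      ¬(ω ∈ C.X ∧ ω.card = n + 1 ∧ (some ω : Cell V) ∈ SV C rlev τ₀ ω₀ ε) → zSV ω = 0 := by
    intro ω h; rw [hzSVdef]; simp only []; exact if_neg h
  have hzSVspec : ∀ ω : Finset V, zSV ω ≠ 0 ↔
      (ω ∈ C.X ∧ ω.card = n + 1 ∧ (some ω : Cell V) ∈ SV C rlev τ₀ ω₀ ε) := by
    intro ω
    by_cases h : ω ∈ C.X ∧ ω.card = n + 1 ∧ (some ω : Cell V) ∈ SV C rlev τ₀ ω₀ ε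
    · simp [hzSVone ω h, h]
    · simp [hzSVzero ω h, h]
  -- the indicator chain is feasible
  have hSVfeas : IsFeasible C rlev rslt τ₀ ω₀ ε zSV := by
    refine ⟨hzSVone ω₀ ⟨hωX, hωcard, Relation.ReflTransGen.refl⟩, ?_, ?_⟩
    · intro ω hne hnF
      apply hzSVzero ω
      rintro ⟨hX, hcard, hSVm⟩
      exact hnF (hFcell ω hSVm hne)
    · intro τ hτF
      obtain ⟨hτF1, hτF2, hτF3, hτF4⟩ := hτF
      have hτE : τ ∈ Elev C rlev (rlev τ₀ + ε) := ⟨hτF1, hτF2, hτF3⟩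
      obtain ⟨d₁, d₂, hd, hiffd⟩ := htwo τ hτF1 hτF2
      have hboth : ∀ cα cβ : Cell V, faceCell C τ cα → faceCell C τ cβ → cα ≠ cβ →
          cα ∈ SV C rlev τ₀ ω₀ ε → cβ ∈ SV C rlev τ₀ ω₀ ε := by
        intro cα cβ h1 h2 h3 h4
        exact Relation.ReflTransGen.tail h4 ⟨τ, hτE, h1, h2, h3⟩
      cases d₁ with
      | none =>
        cases d₂ with
        | none => exact absurd rfl hd
        | some ω₂ =>
          have hf2' : faceCell C τ (some ω₂) := (hiffd _).2 (Or.inr rfl)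
          have hfn : faceCell C τ (none : Cell V) := (hiffd _).2 (Or.inl rfl)
          have hiffs : ∀ σ : Finset V, (σ ∈ C.X ∧ σ.card = n + 1 ∧ τ ⊆ σ) ↔ σ = ω₂ := by
            intro σ
            constructor
            · intro h
              rcases (hiffd (some σ)).1 h with h' | h'
              · exact absurd h' (by simp)
              · exact Option.some_injective _ h'
            · rintro rfl
              exact hf2'
          rw [bsum_single_s3 C τ zSV hiffs]
          apply hzSVzero ω₂
          rintro ⟨hX1, hcard1, hSV1⟩
          exact hnone (hboth _ _ hf2' hfn (Ne.symm hd) hSV1)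
      | some ω₁ =>
        cases d₂ with
        | none =>
          have hf1' : faceCell C τ (some ω₁) := (hiffd _).2 (Or.inl rfl)
          have hfn : faceCell C τ (none : Cell V) := (hiffd _).2 (Or.inr rfl)
          have hiffs : ∀ σ : Finset V, (σ ∈ C.X ∧ σ.card = n + 1 ∧ τ ⊆ σ) ↔ σ = ω₁ := by
            intro σ
            constructor
            · intro h
              rcases (hiffd (some σ)).1 h with h' | h'
              · exact Option.some_injective _ h'
              · exact absurd h' (by simp)
            · rintro rfl
              exact hf1'
          rw [bsum_single_s3 C τ zSV hiffs]
          apply hzSVzero ω₁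
          rintro ⟨hX1, hcard1, hSV1⟩
          exact hnone (hboth _ _ hf1' hfn hd hSV1)
        | some ω₂ =>
          have hne12 : ω₁ ≠ ω₂ := fun h => hd (by rw [h])
          have hf1' : faceCell C τ (some ω₁) := (hiffd _).2 (Or.inl rfl)
          have hf2' : faceCell C τ (some ω₂) := (hiffd _).2 (Or.inr rfl)
          have hiff' := hcof τ hτF1 hτF2 ω₁ ω₂ hne12 hf1' hf2'
          rw [bsum_pair_s3 C τ zSV hne12 hiff']
          have heq12 : zSV ω₁ = zSV ω₂ := by
            by_cases h1 : (some ω₁ : Cell V) ∈ SV C rlev τ₀ ω₀ ε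
            · have h2 := hboth _ _ hf1' hf2' hd h1
              rw [hzSVone ω₁ ⟨hf1'.1, hf1'.2.1, h1⟩, hzSVone ω₂ ⟨hf2'.1, hf2'.2.1, h2⟩]
            · have h2 : (some ω₂ : Cell V) ∉ SV C rlev τ₀ ω₀ ε :=
                fun h => h1 (hboth _ _ hf2' hf1' (Ne.symm hd) h)
              rw [hzSVzero ω₁ (fun h => h1 h.2.2), hzSVzero ω₂ (fun h => h2 h.2.2)]
          rw [heq12, zmod2_add_self]
  -- the indicator chain is sub-feasible
  have hSVsub : IsSubFeasible C rlev rslt τ₀ ω₀ ε zSV := by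
    refine ⟨hSVfeas, ?_⟩
    intro ω hne hnOV
    apply hzSVzero ω
    rintro ⟨hX, hcard, hSVm⟩
    exact hnOV ⟨τ₀, hpair, hKVsub _ hSVm⟩
  -- counting
  have hzSVfil : C.X.filter (fun ω => zSV ω ≠ 0) =
      C.X.filter (fun ω => ω.card = n + 1 ∧ (some ω : Cell V) ∈ SV C rlev τ₀ ω₀ ε) := by
    ext ω
    simp only [Finset.mem_filter]
    constructor
    · rintro ⟨h1, h2⟩
      have h3 := (hzSVspec ω).1 h2
      exact ⟨h1, h3.2.1, h3.2.2⟩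
    · rintro ⟨h1, h2⟩
      exact ⟨h1, (hzSVspec ω).2 ⟨h1, h2⟩⟩
  have hsubfil : ∀ w : Finset V → ZMod 2, IsFeasible C rlev rslt τ₀ ω₀ ε w →
      C.X.filter (fun ω => ω.card = n + 1 ∧ (some ω : Cell V) ∈ SV C rlev τ₀ ω₀ ε) ⊆
      C.X.filter (fun ω => w ω ≠ 0) := by
    intro w hw ω hω
    rw [Finset.mem_filter] at hω ⊢
    obtain ⟨h1, h2, h3⟩ := hω
    obtain ⟨ω'', heq, hw1⟩ := hlower w hw (some ω) h3
    injection heq with heq'; subst heq'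
    exact ⟨h1, by rw [hw1]; exact one_ne_zero⟩
  have hzSVcard : norm0 C zSV =
      (C.X.filter (fun ω => ω.card = n + 1 ∧ (some ω : Cell V) ∈ SV C rlev τ₀ ω₀ ε)).card := by
    rw [norm0, hzSVfil]
  have hz_eq : C.X.filter (fun ω => z ω ≠ 0) =
      C.X.filter (fun ω => ω.card = n + 1 ∧ (some ω : Cell V) ∈ SV C rlev τ₀ ω₀ ε) := by
    refine (Finset.eq_of_subset_of_card_le (hsubfil z hz.1) ?_).symm
    calc (C.X.filter (fun ω => z ω ≠ 0)).card = norm0 C z := rfl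
      _ ≤ norm0 C zSV := hzmin zSV hSVsub
      _ = _ := hzSVcard
  have hz'_eq : C.X.filter (fun ω => z' ω ≠ 0) =
      C.X.filter (fun ω => ω.card = n + 1 ∧ (some ω : Cell V) ∈ SV C rlev τ₀ ω₀ ε) := by
    refine (Finset.eq_of_subset_of_card_le (hsubfil z' hz') ?_).symm
    calc (C.X.filter (fun ω => z' ω ≠ 0)).card = norm0 C z' := rfl
      _ ≤ norm0 C zSV := hz'min zSV hSVfeas
      _ = _ := hzSVcard
  have hvan : ∀ w : Finset V → ZMod 2, IsFeasible C rlev rslt τ₀ ω₀ ε w →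
      ∀ ω : Finset V, ω ∉ C.X → w ω = 0 := by
    intro w hw ω hω
    exact hw.2.1 ω (fun h => hω (by rw [h]; exact hωX)) (fun h => hω h.1)
  have hchar : ∀ w : Finset V → ZMod 2,
      C.X.filter (fun ω => w ω ≠ 0) =
        C.X.filter (fun ω => ω.card = n + 1 ∧ (some ω : Cell V) ∈ SV C rlev τ₀ ω₀ ε) →
      (∀ ω : Finset V, ω ∉ C.X → w ω = 0) →
      ∀ ω : Finset V, w ω ≠ 0 ↔ (some ω : Cell V) ∈ SV C rlev τ₀ ω₀ ε := by
    intro w hfil hv ω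
    constructor
    · intro h
      have hX : ω ∈ C.X := by
        by_contra hX
        exact h (hv ω hX)
      have hmem : ω ∈ C.X.filter (fun ω => w ω ≠ 0) := Finset.mem_filter.2 ⟨hX, h⟩
      rw [hfil] at hmem
      exact (Finset.mem_filter.1 hmem).2.2
    · intro h
      obtain ⟨ω'', heq, hX, hcard, -⟩ := hcellSV (some ω) h
      injection heq with heq'; subst heq'
      have hmem : ω ∈ C.X.filter (fun ω => w ω ≠ 0) := by
        rw [hfil]
        exact Finset.mem_filter.2 ⟨hX, hcard, h⟩
      exact (Finset.mem_filter.1 hmem).2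
  have h1 := hchar z hz_eq (hvan z hz.1)
  have h2 := hchar z' hz'_eq (hvan z' hz')
  refine ⟨?_, h1⟩
  funext ω
  by_cases hmem : (some ω : Cell V) ∈ SV C rlev τ₀ ω₀ ε
  · rw [zmod2_eq_one ((h1 ω).2 hmem), zmod2_eq_one ((h2 ω).2 hmem)]
  · have e1 : z ω = 0 := by
      by_contra h
      exact hmem ((h1 ω).1 h)
    have e2 : z' ω = 0 := by
      by_contra h
      exact hmem ((h2 ω).1 h)
    rw [e1, e2]

end StableVol
end
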